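/- arXiv:2204.01665 — 5 statements merged into one kernel-verified Lean document; each statement's English description precedes it below -/
import Mathlib

section
/- Let S be a subset of F_2^n, δ ∈ (0,1), and t a natural number with 2^t ≥ |S|(|S|-1)/(2δ). Then at least a (1-δ)-fraction of all surjective linear maps L : F_2^n → F_2^t map S injectively into F_2^t. -/
noncomputable instance (n t : ℕ) :
    Fintype ((Fin n → ZMod 2) →ₗ[ZMod 2] (Fin t → ZMod 2)) := by
  classical exact Fintype.ofInjective (fun L => ⇑L) DFunLike.coe_injective

/-- Hash lemma: for `z ≠ 0`, the surjective maps killing `z` are at most a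
`2^{-t}` fraction of surjective maps. -/
lemma birthday_hash_count (n t : ℕ) (z : Fin n → ZMod 2) (hz : z ≠ 0)
    (p q : Finset ((Fin n → ZMod 2) →ₗ[ZMod 2] (Fin t → ZMod 2)))
    (hp : ∀ L ∈ p, Function.Surjective L ∧ L z = 0)
    (hq : ∀ L : (Fin n → ZMod 2) →ₗ[ZMod 2] (Fin t → ZMod 2),
      Function.Surjective L → L ∈ q) :
    2 ^ t * p.card ≤ q.card := by
  classical
  obtain ⟨i, hi⟩ : ∃ i, z i ≠ 0 := by
    by_contra h
    push_neg at h
    exact hz (funext h)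
  have hzi : z i = 1 := by
    have h2 : ∀ a : ZMod 2, a ≠ 0 → a = 1 := by decide
    exact h2 _ hi
  set φ : (Fin n → ZMod 2) →ₗ[ZMod 2] ZMod 2 := LinearMap.proj i with hφ
  have hφz : φ z = 1 := hzi
  set f : (Fin t → ZMod 2) × ((Fin n → ZMod 2) →ₗ[ZMod 2] (Fin t → ZMod 2)) →
      ((Fin n → ZMod 2) →ₗ[ZMod 2] (Fin t → ZMod 2)) :=
    fun x => x.2 + LinearMap.smulRight φ x.1 with hf
  have happ : ∀ w L v, f (w, L) v = L v + φ v • w := by intro w L v; simp [hf]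
  have key : ((Finset.univ : Finset (Fin t → ZMod 2)) ×ˢ p).card ≤ q.card := by
    apply Finset.card_le_card_of_injOn f
    · rintro ⟨w, L⟩ hwL
      rw [Finset.mem_coe, Finset.mem_product] at hwL
      obtain ⟨hLs, hLz⟩ := hp L hwL.2
      apply hq
      intro u
      obtain ⟨v, hv⟩ := hLs u
      refine ⟨v - v i • z, ?_⟩
      rw [happ]
      have h1 : φ (v - v i • z) = 0 := by
        simp [hφ, hzi]
      have h2 : L (v - v i • z) = u := by
        rw [map_sub, map_smul, hLz, smul_zero, sub_zero, hv]
      rw [h1, h2, zero_smul, add_zero]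
    · rintro ⟨w, L⟩ hwL ⟨w', L'⟩ hwL' heq
      rw [Finset.mem_coe, Finset.mem_product] at hwL hwL'
      have hLz := (hp L hwL.2).2
      have hLz' := (hp L' hwL'.2).2
      have hw : w = w' := by
        have := congrArg (fun g => g z) heq
        simpa [happ, hLz, hLz', hφz] using this
      subst hw
      have hL : L = L' := by
        apply LinearMap.ext
        intro v
        have := congrArg (fun g => g v) heq
        simp only [happ] at this
        exact add_right_cancel this
      rw [hL]
  have hcardW : Fintype.card (Fin t → ZMod 2) = 2 ^ t := by
    rw [Fintype.card_fun]
    simp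
  rw [← hcardW, ← Finset.card_univ, ← Finset.card_product]
  exact key

/-- if `2^t ≥ |S|(|S|−1)/(2δ)`, then at least a `(1−δ)`-fraction of all
surjective linear maps `L : F_2^n → F_2^t` map `S` injectively into `F_2^t`. -/
theorem birthday_hash (n t : ℕ) (S : Finset (Fin n → ZMod 2)) (δ : ℝ)
    (hδ : δ ∈ Set.Ioo (0 : ℝ) 1)
    (ht : (S.card : ℝ) * ((S.card : ℝ) - 1) / (2 * δ) ≤ 2 ^ t) :
    (1 - δ) *
        (Nat.card {L : (Fin n → ZMod 2) →ₗ[ZMod 2] (Fin t → ZMod 2) //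
          Function.Surjective L} : ℝ) ≤
      (Nat.card {L : (Fin n → ZMod 2) →ₗ[ZMod 2] (Fin t → ZMod 2) //
        Function.Surjective L ∧ Set.InjOn L (S : Set (Fin n → ZMod 2))} : ℝ) := by
  classical
  set Q : Finset ((Fin n → ZMod 2) →ₗ[ZMod 2] (Fin t → ZMod 2)) :=
    Finset.univ.filter (fun L => Function.Surjective L) with hQ
  set B : Finset ((Fin n → ZMod 2) →ₗ[ZMod 2] (Fin t → ZMod 2)) :=
    Q.filter (fun L => Set.InjOn L (S : Set (Fin n → ZMod 2))) with hB
  set Bad : Finset ((Fin n → ZMod 2) →ₗ[ZMod 2] (Fin t → ZMod 2)) :=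
    Q.filter (fun L => ¬ Set.InjOn L (S : Set (Fin n → ZMod 2))) with hBad
  have hcard1 : Nat.card {L : (Fin n → ZMod 2) →ₗ[ZMod 2] (Fin t → ZMod 2) //
      Function.Surjective L} = Q.card := by
    rw [Nat.card_eq_fintype_card, Fintype.card_subtype]
  have hcard2 : Nat.card {L : (Fin n → ZMod 2) →ₗ[ZMod 2] (Fin t → ZMod 2) //
      Function.Surjective L ∧ Set.InjOn L (S : Set (Fin n → ZMod 2))} = B.card := by
    rw [Nat.card_eq_fintype_card, Fintype.card_subtype, hB, hQ, Finset.filter_filter]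
  have hsplit : B.card + Bad.card = Q.card :=
    Finset.card_filter_add_card_filter_not _
  -- double counting
  have step1 : ∀ L ∈ Bad,
      2 ≤ (S.offDiag.filter (fun pr => L pr.1 = L pr.2)).card := by
    intro L hL
    have hni : ¬ Set.InjOn L (S : Set (Fin n → ZMod 2)) := (Finset.mem_filter.mp hL).2
    rw [Set.InjOn] at hni
    push_neg at hni
    obtain ⟨x, hx, y, hy, hxy, hne⟩ := hni
    rw [Finset.mem_coe] at hx hy
    have hsub : ({(x, y), (y, x)} : Finset _) ⊆
        S.offDiag.filter (fun pr => L pr.1 = L pr.2) := by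
      intro pr hpr
      simp only [Finset.mem_insert, Finset.mem_singleton] at hpr
      rcases hpr with h | h <;> subst h
      · exact Finset.mem_filter.mpr ⟨Finset.mem_offDiag.mpr ⟨hx, hy, hne⟩, hxy⟩
      · exact Finset.mem_filter.mpr ⟨Finset.mem_offDiag.mpr ⟨hy, hx, Ne.symm hne⟩, hxy.symm⟩
    have h2 : ({(x, y), (y, x)} : Finset _).card = 2 := by
      rw [Finset.card_insert_of_notMem, Finset.card_singleton]
      rw [Finset.notMem_singleton]
      intro h
      exact hne (Prod.ext_iff.mp h).1
    have hle := Finset.card_le_card hsub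
    rw [h2] at hle
    exact hle
  have step2 : 2 * Bad.card ≤
      ∑ pr ∈ S.offDiag, (Bad.filter (fun L => L pr.1 = L pr.2)).card := by
    calc 2 * Bad.card = ∑ _L ∈ Bad, 2 := by rw [Finset.sum_const, smul_eq_mul, mul_comm]
      _ ≤ ∑ L ∈ Bad, (S.offDiag.filter (fun pr => L pr.1 = L pr.2)).card :=
          Finset.sum_le_sum step1
      _ = ∑ pr ∈ S.offDiag, (Bad.filter (fun L => L pr.1 = L pr.2)).card := by
          simp_rw [Finset.card_filter]
          exact Finset.sum_comm
  have step3 : ∀ pr ∈ S.offDiag,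
      2 ^ t * (Bad.filter (fun L => L pr.1 = L pr.2)).card ≤ Q.card := by
    intro pr hpr
    obtain ⟨_, _, hne⟩ := Finset.mem_offDiag.mp hpr
    apply birthday_hash_count n t (pr.1 - pr.2) (sub_ne_zero.mpr hne)
    · intro L hL
      rw [Finset.mem_filter] at hL
      have hLQ := hL.1
      rw [hBad, Finset.mem_filter, hQ, Finset.mem_filter] at hLQ
      exact ⟨hLQ.1.2, by rw [map_sub, sub_eq_zero]; exact hL.2⟩
    · intro L hLs
      rw [hQ, Finset.mem_filter]
      exact ⟨Finset.mem_univ _, hLs⟩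
  have key : 2 ^ t * (2 * Bad.card) ≤ (S.card * S.card - S.card) * Q.card := by
    calc 2 ^ t * (2 * Bad.card)
        ≤ 2 ^ t * ∑ pr ∈ S.offDiag, (Bad.filter (fun L => L pr.1 = L pr.2)).card :=
          Nat.mul_le_mul_left _ step2
      _ = ∑ pr ∈ S.offDiag, 2 ^ t * (Bad.filter (fun L => L pr.1 = L pr.2)).card :=
          Finset.mul_sum _ _ _
      _ ≤ ∑ _pr ∈ S.offDiag, Q.card := Finset.sum_le_sum step3
      _ = S.offDiag.card * Q.card := by rw [Finset.sum_const, smul_eq_mul]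
      _ = (S.card * S.card - S.card) * Q.card := by rw [Finset.offDiag_card]
  -- pass to reals
  have hδ0 : 0 < δ := hδ.1
  have hsle : S.card ≤ S.card * S.card := by
    rcases Nat.eq_zero_or_pos S.card with h | h
    · simp [h]
    · exact Nat.le_mul_of_pos_left _ h
  have hkeyR : 2 ^ t * (2 * (Bad.card : ℝ)) ≤
      ((S.card : ℝ) * S.card - S.card) * Q.card := by
    have := key
    have hcast : ((S.card * S.card - S.card : ℕ) : ℝ) =
        (S.card : ℝ) * S.card - S.card := by
      push_cast [Nat.cast_sub hsle]; ring
    calc (2:ℝ) ^ t * (2 * (Bad.card : ℝ)) = ((2 ^ t * (2 * Bad.card) : ℕ) : ℝ) := by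
          push_cast; ring
      _ ≤ (((S.card * S.card - S.card) * Q.card : ℕ) : ℝ) := by exact_mod_cast this
      _ = ((S.card : ℝ) * S.card - S.card) * Q.card := by rw [Nat.cast_mul, hcast]
  have hs : (S.card : ℝ) * ((S.card : ℝ) - 1) ≤ 2 * δ * 2 ^ t := by
    have h2δ : (0:ℝ) < 2 * δ := by linarith
    calc (S.card : ℝ) * ((S.card : ℝ) - 1)
        = (S.card : ℝ) * ((S.card : ℝ) - 1) / (2 * δ) * (2 * δ) := by
          field_simp
      _ ≤ 2 ^ t * (2 * δ) := by
          exact mul_le_mul_of_nonneg_right ht (le_of_lt h2δ)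
      _ = 2 * δ * 2 ^ t := by ring
  have h2t : (0:ℝ) < 2 ^ t := by positivity
  have hQ0 : (0:ℝ) ≤ (Q.card : ℝ) := Nat.cast_nonneg _
  have hBadδ : (Bad.card : ℝ) ≤ δ * Q.card := by
    have hmul : ((S.card : ℝ) * S.card - S.card) * Q.card ≤ 2 * δ * 2 ^ t * Q.card := by
      apply mul_le_mul_of_nonneg_right _ hQ0
      nlinarith [hs]
    nlinarith [hkeyR, hmul, h2t]
  rw [hcard1, hcard2]
  have hsplitR : (B.card : ℝ) + Bad.card = Q.card := by exact_mod_cast hsplit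
  nlinarith [hBadδ, hsplitR, hQ0]
end

section
/- Let F be a field, d a nonnegative integer, and f ∈ F[x_1,…,x_n] a nonzero polynomial of total degree at most d. Then for any finite subset U ⊆ F, the sum over all points a ∈ U^n of mult(f, a) is at most d·|U|^{n-1}. -/
open MvPolynomial

/-- The multivariate Hasse derivative: `hasseDeriv i f` is the coefficient polynomial of
`z^i` in the expansion `f(x+z) = Σ_j f^{(j)}(x) z^j`. -/
noncomputable def hasseDeriv {n : ℕ} {R : Type*} [CommRing R] (i : Fin n →₀ ℕ)
    (f : MvPolynomial (Fin n) R) : MvPolynomial (Fin n) R :=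
  (AddMonoidAlgebra.coeff f).sum fun d c =>
    (∏ k ∈ d.support ∪ i.support, Nat.choose (d k) (i k)) •
      MvPolynomial.monomial (d - i) c

/-- `f` vanishes to order (multiplicity) at least `m` at the point `a`:
all Hasse derivatives of weight less than `m` vanish at `a`. -/
def vanishesTo {n : ℕ} {R : Type*} [CommRing R] (f : MvPolynomial (Fin n) R)
    (a : Fin n → R) (m : ℕ) : Prop :=
  ∀ j : Fin n →₀ ℕ, (j.sum fun _ e => e) < m → MvPolynomial.eval a (hasseDeriv j f) = 0

section Aux

variable {F : Type*} [Field F]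

noncomputable def shift {n : ℕ} (a : Fin n → F) :
    MvPolynomial (Fin n) F →+* MvPolynomial (Fin n) F :=
  eval₂Hom C (fun k => X k + C (a k))

noncomputable def mOrd {n : ℕ} (f : MvPolynomial (Fin n) F) (a : Fin n → F) : ℕ :=
  sInf {w | ∃ i : Fin n →₀ ℕ, coeff i (shift a f) ≠ 0 ∧ (i.sum fun _ e => e) = w}

lemma prod_coeff {n : ℕ} (a : Fin n → F) (d i : Fin n →₀ ℕ) :
    coeff i (∏ k ∈ d.support, (X k + C (a k)) ^ d k) =
      ∏ k ∈ d.support ∪ i.support, (((d k).choose (i k) : F) * a k ^ (d k - i k)) := by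
  induction d using Finsupp.induction generalizing i with
  | zero =>
      rcases eq_or_ne i 0 with rfl | hi
      · simp
      · obtain ⟨k, hk⟩ := Finsupp.support_nonempty_iff.mpr hi
        rw [Finsupp.support_zero, Finset.prod_empty, coeff_one, if_neg (fun h => hi h.symm)]
        refine (Finset.prod_eq_zero (Finset.mem_union_right _ hk) ?_).symm
        have : i k ≠ 0 := Finsupp.mem_support_iff.mp hk
        simp [Nat.choose_eq_zero_of_lt (Nat.pos_of_ne_zero this)]
  | single_add j mj d' hj hmj IH =>
    classical
    set dd := Finsupp.single j mj + d' with hdd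
    have hsupp : dd.support = insert j d'.support := by
      rw [hdd, Finsupp.support_add_eq, Finsupp.support_single_ne_zero _ hmj]
      · ext k; simp
      · rw [Finsupp.support_single_ne_zero _ hmj]
        simpa using hj
    have hddj : dd j = mj := by simp [hdd, Finsupp.notMem_support_iff.mp hj]
    have hddk : ∀ k, k ≠ j → dd k = d' k := by
      intro k hk; simp [hdd, Finsupp.single_apply, hk.symm]
    set P := ∏ k ∈ d'.support, (X k + C (a k)) ^ d' k with hP
    have hprod : ∏ k ∈ dd.support, (X k + C (a k)) ^ dd k = (X j + C (a j)) ^ mj * P := by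
      rw [hsupp, Finset.prod_insert hj, hddj]
      congr 1
      exact Finset.prod_congr rfl fun k hk => by rw [hddk k (fun h => hj (h ▸ hk))]
    rw [hprod, add_pow, Finset.sum_mul, coeff_sum]
    have hterm : ∀ s, X j ^ s * C (a j) ^ (mj - s) * (↑(mj.choose s) : MvPolynomial (Fin n) F) * P
        = P * monomial (Finsupp.single j s) (a j ^ (mj - s) * (mj.choose s : F)) := by
      intro s
      have h1 : C (a j ^ (mj - s) * (mj.choose s : F)) * monomial (Finsupp.single j s) (1:F)
          = monomial (Finsupp.single j s) (a j ^ (mj - s) * (mj.choose s : F)) := by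
        rw [C_mul_monomial, mul_one]
      rw [X_pow_eq_monomial, ← map_pow, ← map_natCast (C : F →+* MvPolynomial (Fin n) F), ← h1,
        map_mul, map_pow]
      ring
    simp only [hterm, coeff_mul_monomial']
    -- now : ∑ s ∈ range (mj+1), ite (Finsupp.single j s ≤ i) (coeff (i - Finsupp.single j s) P * (a j ^ (mj - s) * choose)) 0 = RHS
    have hzero : ∀ s, s < i j →
        coeff (i - Finsupp.single j s) P = 0 := by
      intro s hs
      rw [IH]
      refine Finset.prod_eq_zero (i := j) (Finset.mem_union_right _ ?_) ?_
      · rw [Finsupp.mem_support_iff, Finsupp.tsub_apply, Finsupp.single_eq_same]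
        omega
      · rw [Finsupp.notMem_support_iff.mp hj, Finsupp.tsub_apply, Finsupp.single_eq_same,
          Nat.choose_eq_zero_of_lt (by omega)]
        simp
    by_cases hij : i j ≤ mj
    · rw [Finset.sum_eq_single_of_mem (i j) (Finset.mem_range.mpr (by omega))]
      · have herase : i.erase j = i - Finsupp.single j (i j) := by
          ext k
          rcases eq_or_ne k j with rfl | hk
          · simp [Finsupp.erase_same, Finsupp.tsub_apply]
          · simp [Finsupp.erase_ne hk, Finsupp.tsub_apply, Finsupp.single_eq_of_ne hk]
        rw [if_pos (Finsupp.single_le_iff.mpr le_rfl), ← herase, IH]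
        have hset : dd.support ∪ i.support = insert j (d'.support ∪ ((i.erase j).support)) := by
          rw [hsupp, Finsupp.support_erase]
          ext k
          by_cases hkj : k = j <;> simp [hkj, Finsupp.mem_support_iff]
        rw [hset, Finset.prod_insert (by simp [hj])]
        have : ∏ k ∈ d'.support ∪ (i.erase j).support,
            (((d' k).choose ((i.erase j) k) : F) * a k ^ (d' k - (i.erase j) k))
            = ∏ k ∈ d'.support ∪ (i.erase j).support,
            (((dd k).choose (i k) : F) * a k ^ (dd k - i k)) := by
          refine Finset.prod_congr rfl fun k hk => ?_
          have hkj : k ≠ j := by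
            rcases Finset.mem_union.mp hk with h | h
            · exact fun h' => hj (h' ▸ h)
            · rw [Finsupp.support_erase] at h; exact Finset.ne_of_mem_erase h
          rw [hddk k hkj, Finsupp.erase_ne hkj]
        rw [this, hddj]
        ring
      · intro s hs hsne
        rcases lt_or_gt_of_ne hsne with h | h
        · rw [if_pos (Finsupp.single_le_iff.mpr (by omega)), hzero s h, zero_mul]
        · rw [if_neg (fun hle => by have := Finsupp.single_le_iff.mp hle; omega)]
    · rw [Finset.sum_eq_zero, eq_comm]
      · refine Finset.prod_eq_zero (i := j) (Finset.mem_union_left _ ?_) ?_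
        · rw [hsupp]; exact Finset.mem_insert_self _ _
        · rw [hddj, Nat.choose_eq_zero_of_lt (by omega)]; simp
      · intro s hs
        have : s < i j := by have := Finset.mem_range.mp hs; omega
        rw [if_pos (Finsupp.single_le_iff.mpr (by omega)), hzero s this, zero_mul]

lemma coeff_shift {n : ℕ} (a : Fin n → F) (i : Fin n →₀ ℕ) (f : MvPolynomial (Fin n) F) :
    coeff i (shift a f) = eval a (hasseDeriv i f) := by
  classical
  rw [shift, coe_eval₂Hom, eval₂_eq, coeff_sum, hasseDeriv, Finsupp.sum]
  rw [map_sum]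
  refine Finset.sum_congr rfl fun d _ => ?_
  rw [coeff_C_mul, prod_coeff, map_nsmul, eval_monomial, nsmul_eq_mul, Nat.cast_prod]
  rw [Finset.prod_mul_distrib]
  have hsub : (d - i).support ⊆ d.support ∪ i.support := by
    intro k hk
    rw [Finsupp.mem_support_iff, Finsupp.tsub_apply] at hk
    exact Finset.mem_union_left _ (Finsupp.mem_support_iff.mpr (by omega))
  have hpow : ∏ k ∈ d.support ∪ i.support, a k ^ (d k - i k)
      = (d - i).prod fun k e => a k ^ e := by
    rw [Finsupp.prod]
    refine (Finset.prod_subset hsub ?_).symm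
    intro k _ hk
    have : d k - i k = 0 := by
      have := Finsupp.notMem_support_iff.mp hk
      rw [← Finsupp.tsub_apply d i k, this]
    rw [this, pow_zero]
  rw [hpow]
  show coeff d f * _ = _ * (coeff d f * _)
  ring

lemma shift_shift {n : ℕ} (a : Fin n → F) (f : MvPolynomial (Fin n) F) :
    shift (-a) (shift a f) = f := by
  have h : (shift (-a)).comp (shift a) = RingHom.id (MvPolynomial (Fin n) F) := by
    apply ringHom_ext
    · intro r; simp [shift]
    · intro k; simp [shift]
  exact DFunLike.congr_fun h f

lemma shift_ne_zero {n : ℕ} (a : Fin n → F) {f : MvPolynomial (Fin n) F} (hf : f ≠ 0) :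
    shift a f ≠ 0 := by
  intro h
  apply hf
  rw [← shift_shift a f, h, map_zero]

lemma mOrd_set_nonempty {n : ℕ} {f : MvPolynomial (Fin n) F} (hf : f ≠ 0) (a : Fin n → F) :
    {w | ∃ i : Fin n →₀ ℕ, coeff i (shift a f) ≠ 0 ∧ (i.sum fun _ e => e) = w}.Nonempty := by
  obtain ⟨i, hi⟩ := ne_zero_iff.mp (shift_ne_zero a hf)
  exact ⟨_, i, hi, rfl⟩

lemma mOrd_le {n : ℕ} {f : MvPolynomial (Fin n) F} {a : Fin n → F} {i : Fin n →₀ ℕ}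
    (h : coeff i (shift a f) ≠ 0) : mOrd f a ≤ i.sum fun _ e => e :=
  Nat.sInf_le ⟨i, h, rfl⟩

lemma mOrd_exists {n : ℕ} {f : MvPolynomial (Fin n) F} (hf : f ≠ 0) (a : Fin n → F) :
    ∃ i : Fin n →₀ ℕ, coeff i (shift a f) ≠ 0 ∧ (i.sum fun _ e => e) = mOrd f a :=
  Nat.sInf_mem (mOrd_set_nonempty hf a)

lemma mOrd_zero_of_n0 {f : MvPolynomial (Fin 0) F} (hf : f ≠ 0) (a : Fin 0 → F) :
    mOrd f a = 0 := by
  have h := shift_ne_zero a hf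
  have : coeff 0 (shift a f) ≠ 0 := by
    intro h0
    apply h
    have := (MvPolynomial.eq_C_of_isEmpty (shift a f))
    rw [this, h0, map_zero]
  exact Nat.le_zero.mp (le_of_le_of_eq (mOrd_le this) (by simp))

lemma taylor_coeff_sum {R : Type*} [CommRing R] (w : Polynomial R) (r : R) (k0 N : ℕ)
    (hN : w.natDegree < N) :
    (Polynomial.taylor r w).coeff k0
      = ∑ i ∈ Finset.range N, (i.choose k0 : R) * w.coeff i * r ^ (i - k0) := by
  rw [Polynomial.taylor_coeff, Polynomial.hasseDeriv_apply,
    Polynomial.sum_over_range' w (fun n => by simp) N hN, Polynomial.eval_finset_sum]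
  exact Finset.sum_congr rfl fun i _ => by rw [Polynomial.eval_monomial]; try ring

lemma taylor_rootMult_ne_zero {v : Polynomial F} (hv : v ≠ 0) (b : F) :
    (Polynomial.taylor b v).coeff (v.rootMultiplicity b) ≠ 0 := by
  have h1 := Polynomial.pow_mul_divByMonic_rootMultiplicity_eq v b
  have h2 := Polynomial.eval_divByMonic_pow_rootMultiplicity_ne_zero b hv
  set k0 := v.rootMultiplicity b
  set q := v /ₘ (Polynomial.X - Polynomial.C b) ^ k0 with hq
  have : Polynomial.taylor b v = Polynomial.X ^ k0 * Polynomial.taylor b q := by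
    rw [← h1, Polynomial.taylor_mul]
    congr 1
    rw [Polynomial.taylor_apply, Polynomial.pow_comp, Polynomial.sub_comp, Polynomial.X_comp,
      Polynomial.C_comp]
    simp
  rw [this, mul_comm, Polynomial.coeff_mul_X_pow' ]
  simp only [le_refl, if_true, Nat.sub_self]
  rw [Polynomial.taylor_coeff_zero]
  exact h2
lemma sum_rootMult_le {v : Polynomial F} (hv : v ≠ 0) (U : Finset F) :
    ∑ b ∈ U, v.rootMultiplicity b ≤ v.natDegree := by
  classical
  have h1 : ∀ b, v.rootMultiplicity b = v.roots.count b := fun b => (Polynomial.count_roots v).symm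
  simp only [h1]
  calc ∑ b ∈ U, v.roots.count b ≤ ∑ b ∈ U ∪ v.roots.toFinset, v.roots.count b :=
        Finset.sum_le_sum_of_subset Finset.subset_union_left
    _ = ∑ b ∈ v.roots.toFinset, v.roots.count b := by
        refine (Finset.sum_subset Finset.subset_union_right ?_).symm
        intro b _ hb
        exact Multiset.count_eq_zero.mpr (fun hc => hb (Multiset.mem_toFinset.mpr hc))
    _ = Multiset.card v.roots := Multiset.toFinset_sum_count_eq _
    _ ≤ v.natDegree := Polynomial.card_roots' v

lemma shift_finSuccEquiv {n : ℕ} (b : F) (a : Fin n → F) (f : MvPolynomial (Fin (n+1)) F) :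
    finSuccEquiv F n (shift (Fin.cons b a) f)
      = Polynomial.taylor (C b) ((finSuccEquiv F n f).map (shift a)) := by
  have homEq : ((finSuccEquiv F n : MvPolynomial (Fin (n+1)) F ≃ₐ[F] _) :
        MvPolynomial (Fin (n+1)) F →+* Polynomial (MvPolynomial (Fin n) F)).comp
        (shift (Fin.cons b a))
      = (Polynomial.eval₂RingHom (Polynomial.C) (Polynomial.X + Polynomial.C (C b))).comp
        ((Polynomial.mapRingHom (shift a)).comp
          ((finSuccEquiv F n : MvPolynomial (Fin (n+1)) F ≃ₐ[F] _) :
            MvPolynomial (Fin (n+1)) F →+* Polynomial (MvPolynomial (Fin n) F))) := by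
    have hC : ∀ r : F, finSuccEquiv F n (C r) = Polynomial.C (C r) := fun r => by
      simp [finSuccEquiv_apply]
    apply ringHom_ext
    · intro r
      simp [shift, hC]
    · intro k
      refine Fin.cases ?_ ?_ k
      · simp [shift, finSuccEquiv_X_zero, Fin.cons_zero, hC]
      · intro j
        simp [shift, finSuccEquiv_X_succ, Fin.cons_succ, hC]
  have happ := DFunLike.congr_fun homEq f
  simp only [RingHom.coe_comp, Function.comp_apply] at happ
  rw [Polynomial.taylor_apply, Polynomial.comp, ← Polynomial.coe_eval₂RingHom]
  exact happ

lemma step_bound {n : ℕ} {f : MvPolynomial (Fin (n+1)) F} (hf : f ≠ 0) (a : Fin n → F)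
    (U : Finset F) :
    ∑ b ∈ U, mOrd f (Fin.cons b a)
      ≤ U.card * mOrd ((finSuccEquiv F n f).leadingCoeff) a + (finSuccEquiv F n f).natDegree := by
  classical
  set p := finSuccEquiv F n f with hp
  have hpne : p ≠ 0 := by
    intro h
    exact hf ((finSuccEquiv F n).injective (by rw [map_zero]; exact h))
  set t := p.natDegree with ht
  set ft := p.leadingCoeff with hft
  have hftne : ft ≠ 0 := Polynomial.leadingCoeff_ne_zero.mpr hpne
  obtain ⟨istar, histar, hw⟩ := mOrd_exists hftne a
  set w := p.map (shift a : _ →+* _) with hwdef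
  have hwdeg : w.natDegree ≤ t := Polynomial.natDegree_map_le
  set v : Polynomial F :=
    ∑ k ∈ Finset.range (t+1), Polynomial.C (coeff istar (w.coeff k)) * Polynomial.X ^ k with hv
  have hvc : ∀ k, v.coeff k = coeff istar (w.coeff k) := by
    intro k
    rw [hv, Polynomial.finset_sum_coeff]
    simp only [Polynomial.coeff_C_mul, Polynomial.coeff_X_pow, mul_ite, mul_one, mul_zero]
    rw [Finset.sum_ite_eq (Finset.range (t+1)) k (fun k => coeff istar (w.coeff k))]
    by_cases hk : k ∈ Finset.range (t+1)
    · rw [if_pos hk]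
    · rw [if_neg hk]
      have hk' : t < k := by
        by_contra h
        exact hk (Finset.mem_range.mpr (by omega))
      rw [Polynomial.coeff_eq_zero_of_natDegree_lt (lt_of_le_of_lt hwdeg hk'),
        MvPolynomial.coeff_zero]
  have hvt : v.coeff t = coeff istar (shift a ft) := by
    rw [hvc, hwdef, Polynomial.coeff_map]
    rfl
  have hvne : v ≠ 0 := fun h => histar (by rw [← hvt, h, Polynomial.coeff_zero])
  have hvdeg : v.natDegree ≤ t := by
    refine Polynomial.natDegree_le_iff_coeff_eq_zero.mpr fun k hk => ?_
    rw [hvc, Polynomial.coeff_eq_zero_of_natDegree_lt (lt_of_le_of_lt hwdeg hk),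
      MvPolynomial.coeff_zero]
  have key_b : ∀ b : F, mOrd f (Fin.cons b a) ≤ v.rootMultiplicity b + mOrd ft a := by
    intro b
    set k0 := v.rootMultiplicity b with hk0
    have hcoeff : coeff (Finsupp.cons k0 istar) (shift (Fin.cons b a) f)
        = (Polynomial.taylor b v).coeff k0 := by
      rw [← finSuccEquiv_coeff_coeff, shift_finSuccEquiv b a f]
      rw [taylor_coeff_sum _ _ k0 (t+1) (lt_of_le_of_lt hwdeg (Nat.lt_succ_self t)),
          taylor_coeff_sum v b k0 (t+1) (lt_of_le_of_lt hvdeg (Nat.lt_succ_self t))]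
      rw [coeff_sum]
      refine Finset.sum_congr rfl fun i _ => ?_
      rw [hvc, ← map_pow C b (i - k0), mul_assoc,
        ← map_natCast (C : F →+* MvPolynomial (Fin n) F) (i.choose k0), coeff_C_mul]
      rw [mul_comm (w.coeff i) (C (b ^ (i - k0))), coeff_C_mul]
      ring
    have hne : coeff (Finsupp.cons k0 istar) (shift (Fin.cons b a) f) ≠ 0 := by
      rw [hcoeff]; exact taylor_rootMult_ne_zero hvne b
    have hle := mOrd_le hne
    rwa [Finsupp.sum_cons, hw] at hle
  calc ∑ b ∈ U, mOrd f (Fin.cons b a)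
      ≤ ∑ b ∈ U, (v.rootMultiplicity b + mOrd ft a) := Finset.sum_le_sum fun b _ => key_b b
    _ = (∑ b ∈ U, v.rootMultiplicity b) + U.card * mOrd ft a := by
        rw [Finset.sum_add_distrib, Finset.sum_const, smul_eq_mul]
    _ ≤ U.card * mOrd ft a + t := by
        have h1 := sum_rootMult_le hvne U
        omega

lemma main_bound (U : Finset F) : ∀ (n d : ℕ) (f : MvPolynomial (Fin n) F), f ≠ 0 →
    f.totalDegree ≤ d →
    U.card * ∑ a ∈ Fintype.piFinset (fun _ : Fin n => U), mOrd f a ≤ d * U.card ^ n := by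
  intro n
  induction n with
  | zero =>
      intro d f hf _
      have h0 : ∀ a ∈ Fintype.piFinset (fun _ : Fin 0 => U), mOrd f a = 0 :=
        fun a _ => mOrd_zero_of_n0 hf a
      rw [Finset.sum_congr rfl h0]
      simp
  | succ n IH =>
      intro d f hf hdeg
      set p := finSuccEquiv F n f with hp
      have hpne : p ≠ 0 := fun h => hf ((finSuccEquiv F n).injective (by rw [map_zero]; exact h))
      set t := p.natDegree with ht
      set ft := p.leadingCoeff with hft
      have hftne : ft ≠ 0 := Polynomial.leadingCoeff_ne_zero.mpr hpne
      have htd : t ≤ d := by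
        have h1 : t = degreeOf 0 f := natDegree_finSuccEquiv f
        have h2 := degreeOf_le_totalDegree f 0
        omega
      have hftdeg : ft.totalDegree ≤ d - t := by
        have h2 := totalDegree_coeff_finSuccEquiv_add_le f t hftne
        have h2' : ft.totalDegree + t ≤ f.totalDegree := h2
        omega
      have hsplit : ∑ a' ∈ Fintype.piFinset (fun _ : Fin (n+1) => U), mOrd f a'
          = ∑ q ∈ U ×ˢ Fintype.piFinset (fun _ : Fin n => U), mOrd f (Fin.cons q.1 q.2) := by
        refine (Finset.sum_nbij' (fun q => Fin.cons q.1 q.2) (fun a' => (a' 0, Fin.tail a'))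
          ?_ ?_ ?_ ?_ ?_).symm
        · rintro ⟨b, a⟩ hq
          rw [Finset.mem_product] at hq
          refine Fintype.mem_piFinset.mpr fun i => ?_
          refine Fin.cases ?_ ?_ i
          · simpa using hq.1
          · intro j; simpa using Fintype.mem_piFinset.mp hq.2 j
        · intro a' ha'
          rw [Finset.mem_product]
          exact ⟨Fintype.mem_piFinset.mp ha' 0,
            Fintype.mem_piFinset.mpr fun j => Fintype.mem_piFinset.mp ha' j.succ⟩
        · rintro ⟨b, a⟩ _
          simp [Fin.tail_cons]
        · intro a' _
          exact Fin.cons_self_tail a'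
        · rintro ⟨b, a⟩ _
          rfl
      rw [hsplit, Finset.sum_product, Finset.sum_comm]
      have hcard : (Fintype.piFinset (fun _ : Fin n => U)).card = U.card ^ n := by
        simp [Fintype.card_piFinset]
      calc U.card * ∑ a ∈ Fintype.piFinset (fun _ : Fin n => U), ∑ b ∈ U, mOrd f (Fin.cons b a)
          ≤ U.card * ∑ a ∈ Fintype.piFinset (fun _ : Fin n => U), (U.card * mOrd ft a + t) :=
            Nat.mul_le_mul_left _ (Finset.sum_le_sum fun a _ => step_bound hf a U)
        _ = U.card * (U.card * ∑ a ∈ Fintype.piFinset (fun _ : Fin n => U), mOrd ft a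
              + t * U.card ^ n) := by
            rw [Finset.sum_add_distrib, Finset.sum_const, smul_eq_mul, Finset.mul_sum, hcard]
            rw [← Finset.mul_sum]
            ring_nf
        _ ≤ U.card * ((d - t) * U.card ^ n + t * U.card ^ n) := by
            have h3 := IH (d - t) ft hftne hftdeg
            exact Nat.mul_le_mul_left _ (Nat.add_le_add_right h3 _)
        _ = ((d - t) + t) * U.card ^ (n+1) := by ring
        _ = d * U.card ^ (n+1) := by rw [Nat.sub_add_cancel htd]

end Aux

/-- Schwartz–Zippel with multiplicities. If `f ≠ 0` has total degree at most `d`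
and vanishes to order at least `m a` at each point `a` of `U^n`, then
`∑_{a ∈ U^n} m a ≤ d · |U|^{n-1}` (hence the sum of the multiplicities is so bounded). -/
theorem schwartz_zippel_mult {F : Type*} [Field F] {n d : ℕ}
    (f : MvPolynomial (Fin n) F) (hf : f ≠ 0) (hdeg : f.totalDegree ≤ d)
    (U : Finset F) (m : (Fin n → F) → ℕ)
    (hm : ∀ a : Fin n → F, (∀ i, a i ∈ U) → vanishesTo f a (m a)) :
    ∑ a ∈ Fintype.piFinset (fun _ : Fin n => U), m a ≤ d * U.card ^ (n - 1) := by
  classical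
  have hm' : ∀ a : Fin n → F, (∀ i, a i ∈ U) → m a ≤ mOrd f a := by
    intro a ha
    refine le_csInf (mOrd_set_nonempty hf a) ?_
    rintro w ⟨i, hne, rfl⟩
    by_contra h
    push_neg at h
    exact hne (by rw [coeff_shift]; exact hm a ha i h)
  have hsum : ∑ a ∈ Fintype.piFinset (fun _ : Fin n => U), m a
      ≤ ∑ a ∈ Fintype.piFinset (fun _ : Fin n => U), mOrd f a :=
    Finset.sum_le_sum fun a ha => hm' a (fun i => Fintype.mem_piFinset.mp ha i)
  cases n with
  | zero =>
      refine le_trans hsum ?_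
      have h0 : ∀ a ∈ Fintype.piFinset (fun _ : Fin 0 => U), mOrd f a = 0 :=
        fun a _ => mOrd_zero_of_n0 hf a
      rw [Finset.sum_congr rfl h0]
      simp
  | succ k =>
      rcases Finset.eq_empty_or_nonempty U with rfl | hU
      · have hempty : Fintype.piFinset (fun _ : Fin (k+1) => (∅ : Finset F)) = ∅ :=
          Finset.eq_empty_of_forall_notMem fun a ha =>
            absurd (Fintype.mem_piFinset.mp ha 0) (Finset.notMem_empty _)
        rw [hempty, Finset.sum_empty]
        exact Nat.zero_le _
      · have hU0 : 0 < U.card := Finset.card_pos.mpr hU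
        have hb := main_bound U (k+1) d f hf hdeg
        refine le_trans hsum ?_
        have hrw : d * U.card ^ (k+1) = U.card * (d * U.card ^ k) := by ring
        rw [hrw] at hb
        have hfinal := Nat.le_of_mul_le_mul_left hb hU0
        simpa using hfinal
end

section
/- Let f ∈ F[x_1,…,x_n] be a polynomial over a field F, let H = (h_1,…,h_n) be a tuple of polynomials in F[y_1,…,y_m], and let a ∈ F^m. Then mult(f∘H, a) ≥ mult(f, H(a)). -/
open MvPolynomial

namespace MultCompAux

def wt {n : ℕ} (j : Fin n →₀ ℕ) : ℕ := j.sum fun _ e => e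

lemma wt_add {n : ℕ} (u v : Fin n →₀ ℕ) : wt (u + v) = wt u + wt v :=
  Finsupp.sum_add_index' (fun _ => rfl) (fun _ _ _ => rfl)

lemma wt_eq_zero {n : ℕ} {j : Fin n →₀ ℕ} (h : wt j = 0) : j = 0 := by
  rw [wt, Finsupp.sum] at h
  ext k
  by_contra hk
  exact hk (Finset.sum_eq_zero_iff.1 h k (Finsupp.mem_support_iff.2 hk))

variable {F : Type*} [Field F] {n : ℕ}

lemma hasseDeriv_eq_univ {R : Type*} [CommRing R] (i : Fin n →₀ ℕ)
    (f : MvPolynomial (Fin n) R) :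
    hasseDeriv i f =
      (AddMonoidAlgebra.coeff f).sum fun d c => (∏ k : Fin n, Nat.choose (d k) (i k)) • monomial (d - i) c := by
  unfold hasseDeriv
  refine Finsupp.sum_congr fun d _ => ?_
  congr 1
  refine Finset.prod_subset (Finset.subset_univ _) ?_
  intro k _ hk
  simp only [Finset.mem_union, Finsupp.mem_support_iff, not_or, not_not] at hk
  simp [hk.1, hk.2]

lemma binom_pow_expand (k : Fin n) (b : F) (e : ℕ) :
    (X k + C b) ^ e =
      ∑ i ∈ Finset.range (e + 1),
        monomial (Finsupp.single k i) ((Nat.choose e i : F) * b ^ (e - i)) := by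
  rw [add_pow]
  refine Finset.sum_congr rfl fun i _ => ?_
  rw [X_pow_eq_monomial]
  rw [show ((C b : MvPolynomial (Fin n) F)) ^ (e - i) = C (b ^ (e - i)) by rw [← C_pow]]
  rw [show ((e.choose i : MvPolynomial (Fin n) F)) = C ((e.choose i : F)) by
    simp]
  rw [mul_assoc, ← C_mul, mul_comm ((monomial (Finsupp.single k i)) (1:F)) (C _),
    C_mul_monomial, mul_one, mul_comm]

lemma coeff_binom_pow (k : Fin n) (b : F) (e : ℕ) (u : Fin n →₀ ℕ) :
    coeff u ((X k + C b) ^ e) =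
      if u = Finsupp.single k (u k) then (Nat.choose e (u k) : F) * b ^ (e - u k) else 0 := by
  rw [binom_pow_expand, coeff_sum]
  simp only [coeff_monomial]
  by_cases hu : u = Finsupp.single k (u k)
  · rw [if_pos hu]
    have hiff : ∀ i : ℕ, (Finsupp.single k i = u) ↔ i = u k := by
      intro i
      constructor
      · intro h; rw [← h, Finsupp.single_eq_same]
      · intro h; rw [h, ← hu]
    rw [Finset.sum_congr rfl fun i _ => by
      rw [show (if Finsupp.single k i = u then (Nat.choose e i : F) * b ^ (e - i) else 0)
        = if i = u k then (Nat.choose e i : F) * b ^ (e - i) else 0 by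
        simp only [hiff]]]
    rw [Finset.sum_ite_eq' (Finset.range (e + 1)) (u k)
      (fun i => (Nat.choose e i : F) * b ^ (e - i))]
    rcases le_or_gt (u k) e with h | h
    · rw [if_pos (Finset.mem_range.2 (Nat.lt_succ_of_le h))]
    · rw [if_neg (by simp [Nat.lt_succ_iff, not_le.2 h]), Nat.choose_eq_zero_of_lt h]
      simp
  · rw [if_neg hu]
    apply Finset.sum_eq_zero
    intro i _
    rw [if_neg]
    intro hcon
    exact hu (by rw [← hcon, Finsupp.single_eq_same])

lemma coeff_prod_binom (a : Fin n → F) (d : Fin n → ℕ) (s : Finset (Fin n)) (j : Fin n →₀ ℕ) :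
    coeff j (∏ k ∈ s, (X k + C (a k)) ^ d k) =
      if j.support ⊆ s then ∏ k ∈ s, ((Nat.choose (d k) (j k) : F) * a k ^ (d k - j k))
      else 0 := by
  classical
  induction s using Finset.induction_on generalizing j with
  | empty =>
    have hiff : (j.support ⊆ (∅ : Finset (Fin n))) ↔ j = 0 := by
      rw [Finset.subset_empty, Finsupp.support_eq_empty]
    rw [Finset.prod_empty, coeff_one]
    by_cases hj : j = 0 <;> simp [hj, hiff, eq_comm]
  | @insert k s hk ih =>
    have hp0 : (Finsupp.single k (j k), j.erase k) ∈ Finset.HasAntidiagonal.antidiagonal j := by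
      rw [Finset.HasAntidiagonal.mem_antidiagonal]
      exact Finsupp.single_add_erase k j
    rw [Finset.prod_insert hk, coeff_mul]
    rw [Finset.sum_eq_single (Finsupp.single k (j k), j.erase k)]
    · rw [coeff_binom_pow, ih]
      rw [if_pos (by simp)]
      simp only [Finsupp.single_eq_same, Finsupp.support_erase]
      have hcond : (j.support.erase k ⊆ s) ↔ (j.support ⊆ insert k s) :=
        Finset.subset_insert_iff.symm
      by_cases hsub : j.support ⊆ insert k s
      · rw [if_pos (hcond.2 hsub), if_pos hsub, Finset.prod_insert hk]
        congr 1
        refine Finset.prod_congr rfl fun l hl => ?_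
        rw [Finsupp.erase_ne (fun h => hk (by rw [← h]; exact hl))]
      · rw [if_neg (fun h => hsub (hcond.1 h)), if_neg hsub, mul_zero]
    · intro p hp hne
      rw [Finset.HasAntidiagonal.mem_antidiagonal] at hp
      rw [coeff_binom_pow, ih]
      split_ifs with h1 h2
      · exfalso
        apply hne
        have hp2k : p.2 k = 0 := by
          by_contra hc
          exact hk (h2 (Finsupp.mem_support_iff.2 hc))
        have hjk : p.1 k = j k := by
          have := congrArg (fun g => g k) hp
          simpa [hp2k] using this
        have hfst : p.1 = Finsupp.single k (j k) := by rw [← hjk]; exact h1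
        have hsnd : p.2 = j.erase k := by
          ext l
          by_cases hlk : l = k
          · rw [hlk, hp2k, Finsupp.erase_same]
          · have := congrArg (fun g => g l) hp
            simp only [Finsupp.add_apply] at this
            rw [Finsupp.erase_ne hlk, ← this, hfst,
              Finsupp.single_apply, if_neg (fun h => hlk h.symm), zero_add]
        exact Prod.ext hfst hsnd
      all_goals simp
    · exact fun h => absurd hp0 h

lemma eval_hasseDeriv_eq (a : Fin n → F) (j : Fin n →₀ ℕ) (f : MvPolynomial (Fin n) F) :
    eval a (hasseDeriv j f) = coeff j (aeval (fun k => X k + C (a k)) f) := by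
  rw [aeval_def, eval₂_eq', coeff_sum]
  rw [hasseDeriv_eq_univ, Finsupp.sum, map_sum]
  refine Finset.sum_congr rfl fun d hd => ?_
  rw [algebraMap_eq, coeff_C_mul, coeff_prod_binom, if_pos (Finset.subset_univ _)]
  rw [nsmul_eq_mul, map_mul, map_natCast, eval_monomial]
  rw [Finsupp.prod]
  rw [Finset.prod_subset (Finset.subset_univ ((d - j).support)) (fun x _ hx => by
    simp [Finsupp.notMem_support_iff.1 hx])]
  simp only [Finsupp.tsub_apply]
  push_cast
  rw [Finset.prod_mul_distrib]
  simp only [MvPolynomial.coeff]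
  ring

lemma V_mul {s t : ℕ} {p q : MvPolynomial (Fin n) F}
    (hp : ∀ j, wt j < s → coeff j p = 0) (hq : ∀ j, wt j < t → coeff j q = 0) :
    ∀ j, wt j < s + t → coeff j (p * q) = 0 := by
  intro j hj
  rw [coeff_mul]
  refine Finset.sum_eq_zero fun x hx => ?_
  rw [Finset.HasAntidiagonal.mem_antidiagonal] at hx
  have hwt : wt x.1 + wt x.2 = wt j := by rw [← wt_add, hx]
  rcases lt_or_ge (wt x.1) s with h | h
  · rw [hp _ h, zero_mul]
  · rw [hq _ (by omega), mul_zero]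

lemma V_pow {p : MvPolynomial (Fin n) F} (hp : ∀ j, wt j < 1 → coeff j p = 0) (e : ℕ) :
    ∀ j, wt j < e → coeff j (p ^ e) = 0 := by
  induction e with
  | zero => intro j hj; omega
  | succ e ih =>
    rw [pow_succ]
    exact fun j hj => V_mul ih hp j (by omega)

lemma V_prod {ι : Type*} (s : Finset ι) (w : ι → ℕ) (p : ι → MvPolynomial (Fin n) F)
    (h : ∀ i ∈ s, ∀ j, wt j < w i → coeff j (p i) = 0) :
    ∀ j, wt j < ∑ i ∈ s, w i → coeff j (∏ i ∈ s, p i) = 0 := by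
  classical
  induction s using Finset.induction_on with
  | empty => intro j hj; simp at hj
  | @insert i s hi ih =>
    rw [Finset.prod_insert hi, Finset.sum_insert hi]
    exact V_mul (h i (Finset.mem_insert_self i s))
      (ih (fun l hl => h l (Finset.mem_insert_of_mem hl)))

lemma V_aeval {m : ℕ} {r : ℕ} {g : MvPolynomial (Fin n) F}
    (G : Fin n → MvPolynomial (Fin m) F)
    (hg : ∀ j, wt j < r → coeff j g = 0)
    (hG : ∀ k, coeff 0 (G k) = 0) :
    ∀ j, wt j < r → coeff j (aeval G g) = 0 := by
  intro j hj
  rw [aeval_def, eval₂_eq, coeff_sum]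
  refine Finset.sum_eq_zero fun d hd => ?_
  rw [algebraMap_eq, coeff_C_mul]
  have hwd : r ≤ wt d := by
    by_contra hc
    exact (mem_support_iff.1 hd) (hg d (not_le.1 hc))
  have hGv : ∀ k, ∀ u, wt u < 1 → coeff u (G k) = 0 := by
    intro k u hu
    have hu0 : u = 0 := wt_eq_zero (by omega)
    rw [hu0]; exact hG k
  rw [V_prod d.support (fun i => d i) (fun i => G i ^ d i)
    (fun i _ => V_pow (hGv i) (d i)) j (by
      calc wt j < r := hj
        _ ≤ wt d := hwd
        _ = ∑ i ∈ d.support, d i := rfl), mul_zero]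

lemma hasseDeriv_zero' {R : Type*} [CommRing R] (f : MvPolynomial (Fin n) R) :
    hasseDeriv 0 f = f := by
  unfold hasseDeriv
  rw [Finsupp.sum]
  simp only [Finsupp.coe_zero, Pi.zero_apply, Nat.choose_zero_right,
    Finset.prod_const_one, one_smul, tsub_zero]
  exact support_sum_monomial_coeff f

end MultCompAux

/-- `mult(f ∘ H, a) ≥ mult(f, H(a))`: if `f` vanishes to order at least `r` at the
point `H(a)`, then the composition `f(h_1(y),…,h_n(y))` vanishes to order at least `r` at `a`. -/
theorem mult_comp {F : Type*} [Field F] {n m : ℕ}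
    (f : MvPolynomial (Fin n) F) (H : Fin n → MvPolynomial (Fin m) F)
    (a : Fin m → F) (r : ℕ)
    (h : vanishesTo f (fun k => MvPolynomial.eval a (H k)) r) :
    vanishesTo (MvPolynomial.aeval H f) a r := by
  classical
  set b : Fin n → F := fun k => MvPolynomial.eval a (H k) with hb
  set G : Fin n → MvPolynomial (Fin m) F :=
    fun k => aeval (fun l => X l + C (a l)) (H k) - C (b k) with hG
  intro j hj
  rw [MultCompAux.eval_hasseDeriv_eq]
  have hcomp : aeval (fun k => X k + C (a k)) (aeval H f)
      = aeval G (aeval (fun k => X k + C (b k)) f) := by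
    rw [comp_aeval_apply, comp_aeval_apply]
    have hfun : (fun i => (aeval fun k => X k + C (a k)) (H i))
        = fun i => (aeval G) (X i + C (b i)) := by
      funext k
      simp only [map_add, aeval_X, aeval_C, algebraMap_eq, hG]
      rw [sub_add_cancel]
    rw [hfun]
  rw [hcomp]
  refine MultCompAux.V_aeval G ?_ ?_ j hj
  · intro u hu
    rw [← MultCompAux.eval_hasseDeriv_eq]
    exact h u hu
  · intro k
    rw [hG]
    simp only [coeff_sub]
    rw [← MultCompAux.eval_hasseDeriv_eq, MultCompAux.hasseDeriv_zero']
    simp [hb]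
end

section
/- Let q be a prime power and m, d, n, t, ℓ natural numbers with t ≤ q, m = (q^2 + t − 1)ℓ and d = q^2 t ℓ − 1. Suppose Q ∈ F_q[x_1,…,x_n] has degree at most d and vanishes with multiplicity at least m at every point of a set K ⊆ F_q^n. If for some u, v ∈ F_q^n and c ∈ F_q^n the affine 2-flat {c + u s_1 + v s_2 : s_1, s_2 ∈ F_q} contains at least qt points of K, then the bivariate polynomial Q^{(j)}(c + u t_1 + v t_2) ∈ F_q[t_1, t_2] is identically zero for every index tuple j ∈ Z_{≥0}^n of weight less than tℓ. -/
open MvPolynomial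

namespace RV
variable {n : ℕ} {R : Type*} [CommRing R]

def wtv {n : ℕ} (j : Fin n →₀ ℕ) : ℕ := j.sum fun _ e => e

lemma wtv_eq_sum_univ (j : Fin n →₀ ℕ) : wtv j = ∑ k, j k :=
  Finset.sum_subset (Finset.subset_univ _) (fun k _ hk => Finsupp.notMem_support_iff.mp hk)

lemma wtv_add (a b : Fin n →₀ ℕ) : wtv (a + b) = wtv a + wtv b := by
  simp [wtv_eq_sum_univ, Finsupp.add_apply, Finset.sum_add_distrib]

def Nc {n : ℕ} (d j : Fin n →₀ ℕ) : ℕ := ∏ k, (d k).choose (j k)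

lemma Nc_eq_union (d j : Fin n →₀ ℕ) :
    (∏ k ∈ d.support ∪ j.support, (d k).choose (j k)) = Nc d j :=
  Finset.prod_subset (Finset.subset_univ _) (fun k _ hk => by
    simp only [Finset.mem_union, Finsupp.mem_support_iff, not_or, not_not] at hk
    rw [hk.1, hk.2]
    rfl)

lemma Nc_eq_zero {d j : Fin n →₀ ℕ} (h : ¬ j ≤ d) : Nc d j = 0 := by
  rw [Finsupp.le_def] at h
  push_neg at h
  obtain ⟨i, hi⟩ := h
  exact Finset.prod_eq_zero (Finset.mem_univ i) (Nat.choose_eq_zero_of_lt hi)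

lemma Nc_zero_left (j : Fin n →₀ ℕ) : Nc 0 j = if j = 0 then 1 else 0 := by
  split_ifs with h
  · subst h; simp [Nc]
  · apply Nc_eq_zero
    simp only [Finsupp.le_def, Finsupp.coe_zero, Pi.zero_apply]
    intro hle
    exact h (Finsupp.ext fun i => Nat.le_zero.mp (hle i))

lemma hasseDeriv_monomial (j d : Fin n →₀ ℕ) (c : R) :
    hasseDeriv j (monomial d c) = Nc d j • monomial (d - j) c := by
  unfold hasseDeriv
  rw [← single_eq_monomial, AddMonoidAlgebra.coeff_single, Finsupp.sum_single_index (by simp)]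
  rw [Nc_eq_union]

lemma hasseDeriv_add (j : Fin n →₀ ℕ) (p q : MvPolynomial (Fin n) R) :
    hasseDeriv j (p + q) = hasseDeriv j p + hasseDeriv j q := by
  unfold hasseDeriv
  rw [AddMonoidAlgebra.coeff_add]
  exact Finsupp.sum_add_index' (fun d => by simp) (fun d c1 c2 => by
    rw [← smul_add, map_add])

lemma choose_trick (a b c : ℕ) :
    a.choose b * (a - b).choose c = a.choose (b + c) * (b + c).choose b := by
  rcases le_or_gt b a with hb | hb
  · rcases le_or_gt c (a - b) with hc | hc
    · have hbc : b + c ≤ a := by omega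
      have h4 : (b + c).choose b * b.factorial * c.factorial = (b + c).factorial := by
        have := Nat.choose_mul_factorial_mul_factorial (Nat.le_add_right b c)
        have e2 : b + c - b = c := by omega
        rwa [e2] at this
      have hL : a.choose b * (a - b).choose c *
          (b.factorial * c.factorial * (a - b - c).factorial) = a.factorial := by
        calc a.choose b * (a - b).choose c *
              (b.factorial * c.factorial * (a - b - c).factorial)
            = ((a - b).choose c * c.factorial * ((a - b) - c).factorial) *
              (a.choose b * b.factorial) := by ring
          _ = (a - b).factorial * (a.choose b * b.factorial) := by
              rw [Nat.choose_mul_factorial_mul_factorial hc]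
          _ = a.choose b * b.factorial * (a - b).factorial := by ring
          _ = a.factorial := Nat.choose_mul_factorial_mul_factorial hb
      have hR : a.choose (b + c) * (b + c).choose b *
          (b.factorial * c.factorial * (a - b - c).factorial) = a.factorial := by
        have e1 : a - b - c = a - (b + c) := by omega
        calc a.choose (b + c) * (b + c).choose b *
              (b.factorial * c.factorial * (a - b - c).factorial)
            = a.choose (b + c) * ((b + c).choose b * b.factorial * c.factorial) *
              (a - (b + c)).factorial := by rw [e1]; ring
          _ = a.choose (b + c) * (b + c).factorial * (a - (b + c)).factorial := by rw [h4]
          _ = a.factorial := Nat.choose_mul_factorial_mul_factorial hbc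
      have hpos : 0 < b.factorial * c.factorial * (a - b - c).factorial := by positivity
      exact Nat.eq_of_mul_eq_mul_right hpos (hL.trans hR.symm)
    · rw [Nat.choose_eq_zero_of_lt hc, Nat.choose_eq_zero_of_lt (by omega : a < b + c)]
      ring
  · rw [Nat.choose_eq_zero_of_lt hb, Nat.choose_eq_zero_of_lt (by omega : a < b + c)]
    ring

lemma hasseDeriv_comp (a b : Fin n →₀ ℕ) (p : MvPolynomial (Fin n) R) :
    hasseDeriv b (hasseDeriv a p) = Nc (a + b) a • hasseDeriv (a + b) p := by
  induction p using MvPolynomial.induction_on' with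
  | monomial d c =>
    rw [hasseDeriv_monomial, smul_monomial, hasseDeriv_monomial, hasseDeriv_monomial,
      smul_monomial, smul_monomial, smul_monomial]
    rw [tsub_tsub]
    congr 1
    rw [smul_smul, smul_smul]
    congr 1
    have : Nc (d - a) b * Nc d a = Nc d (a + b) * Nc (a + b) a := by
      unfold Nc
      rw [← Finset.prod_mul_distrib, ← Finset.prod_mul_distrib]
      apply Finset.prod_congr rfl
      intro k _
      rw [Finsupp.tsub_apply, Finsupp.add_apply, mul_comm]
      exact choose_trick (d k) (a k) (b k)
    exact this.trans (mul_comm _ _)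
  | add p q hp hq =>
    rw [hasseDeriv_add, hasseDeriv_add, hp, hq, hasseDeriv_add, smul_add]

lemma coeff_hasseDeriv (j k : Fin n →₀ ℕ) (p : MvPolynomial (Fin n) R) :
    coeff k (hasseDeriv j p) = Nc (j + k) j • coeff (j + k) p := by
  induction p using MvPolynomial.induction_on' with
  | monomial d c =>
    rw [hasseDeriv_monomial, coeff_smul, coeff_monomial, coeff_monomial]
    by_cases hd : d = j + k
    · subst hd
      rw [if_pos (add_tsub_cancel_left j k), if_pos rfl]
    · rw [if_neg hd, smul_zero]
      by_cases hsub : d - j = k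
      · rw [if_pos hsub]
        have hle : ¬ j ≤ d := by
          intro hle
          exact hd (by rw [(tsub_eq_iff_eq_add_of_le hle).mp hsub, add_comm])
        rw [Nc_eq_zero hle, zero_smul]
      · rw [if_neg hsub, smul_zero]
  | add p q hp hq =>
    rw [hasseDeriv_add, coeff_add, hp, hq, coeff_add, smul_add]

lemma hasseDeriv_mul_X (j : Fin n →₀ ℕ) (i : Fin n) (p : MvPolynomial (Fin n) R) :
    hasseDeriv j (p * X i) = hasseDeriv j p * X i +
      (if j i = 0 then 0 else hasseDeriv (j - Finsupp.single i 1) p) := by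
  induction p using MvPolynomial.induction_on' with
  | monomial d c =>
    have hX : (monomial d c : MvPolynomial (Fin n) R) * X i
        = monomial (d + Finsupp.single i 1) c := by
      rw [X, monomial_mul, mul_one]
    rw [hX, hasseDeriv_monomial, hasseDeriv_monomial]
    by_cases hji : j i = 0
    · rw [if_pos hji, add_zero]
      have h1 : Nc (d + Finsupp.single i 1) j = Nc d j := by
        apply Finset.prod_congr rfl
        intro k _
        rcases eq_or_ne i k with hk | hk
        · subst hk; simp [hji]
        · simp [Finsupp.single_apply, hk]
      have hidx : d + Finsupp.single i 1 - j = d - j + Finsupp.single i 1 := by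
        ext k
        simp only [Finsupp.tsub_apply, Finsupp.add_apply]
        rcases eq_or_ne i k with hk | hk
        · subst hk; simp [Finsupp.single_apply, hji]
        · simp [Finsupp.single_apply, hk]
      have h2 : (monomial (d + Finsupp.single i 1 - j)) c = monomial (d - j) c * X i := by
        rw [X, monomial_mul, mul_one, hidx]
      rw [h1, h2, smul_mul_assoc]
    · rw [if_neg hji, hasseDeriv_monomial]
      obtain ⟨w, hw⟩ := Nat.exists_eq_succ_of_ne_zero hji
      set s1 := Finsupp.single i 1 with hs1
      set P := ∏ k ∈ Finset.univ.erase i, (d k).choose (j k) with hP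
      have hPs : ∀ (e f : Fin n →₀ ℕ), (∀ k, k ≠ i → e k = d k ∧ f k = j k) →
          Nc e f = (e i).choose (f i) * P := by
        intro e f h
        rw [Nc, ← Finset.prod_erase_mul _ _ (Finset.mem_univ i), mul_comm]
        congr 1
        apply Finset.prod_congr rfl
        intro k hk
        obtain ⟨h1, h2⟩ := h k (Finset.ne_of_mem_erase hk)
        rw [h1, h2]
      have hNc : Nc (d + s1) j = Nc d j + Nc d (j - s1) := by
        rw [hPs (d + s1) j (fun k hk =>
            ⟨by simp [hs1, Finsupp.single_apply, (Ne.symm hk : ¬ i = k)], rfl⟩),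
          hPs d j (fun k _ => ⟨rfl, rfl⟩),
          hPs d (j - s1) (fun k hk => ⟨rfl, by simp [hs1, Finsupp.tsub_apply,
            Finsupp.single_apply, (Ne.symm hk : ¬ i = k)]⟩)]
        have hdi : (d + s1) i = d i + 1 := by simp [hs1]
        have hji' : (j - s1) i = w := by
          simp [hs1, Finsupp.tsub_apply, Finsupp.single_apply, hw]
        rw [hdi, ← add_mul, hji', hw, Nat.choose_succ_succ, Nat.add_comm]
      have hM2 : d + s1 - j = d - (j - s1) := by
        ext k
        simp only [Finsupp.tsub_apply, Finsupp.add_apply]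
        rcases eq_or_ne i k with hk | hk
        · subst hk; simp [hs1, Finsupp.single_apply, hw]
        · simp [hs1, Finsupp.single_apply, hk]
      rw [hNc, add_smul, hM2]
      congr 1
      by_cases hle : j i ≤ d i
      · have : d + s1 - j = d - j + s1 := by
          ext k
          simp only [Finsupp.tsub_apply, Finsupp.add_apply]
          rcases eq_or_ne i k with hk | hk
          · subst hk; simp [hs1, Finsupp.single_apply]; omega
          · simp [hs1, Finsupp.single_apply, hk]
        rw [hM2.symm, this, X, smul_mul_assoc, monomial_mul, mul_one]
      · have hz : Nc d j = 0 := by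
          apply Nc_eq_zero
          rw [Finsupp.le_def]
          push_neg
          exact ⟨i, by omega⟩
        rw [hz, zero_smul, zero_smul, zero_mul]
  | add p q hp hq =>
    by_cases h : j i = 0 <;>
      simp only [h, if_pos, if_neg, ite_true, ite_false, add_mul, hasseDeriv_add, hp, hq] <;>
      ring

lemma taylor_coeff_mv (x : Fin n → R) (Q : MvPolynomial (Fin n) R) (j : Fin n →₀ ℕ) :
    coeff j (aeval (fun i => MvPolynomial.C (x i) + X i) Q) = eval x (hasseDeriv j Q) := by
  induction Q using MvPolynomial.induction_on generalizing j with
  | C a =>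
    rw [aeval_C, algebraMap_eq, coeff_C, C_apply, hasseDeriv_monomial, Nc_zero_left]
    rw [zero_tsub]
    by_cases h : j = 0
    · subst h; simp
    · rw [if_neg h, if_neg (fun hh => h hh.symm), zero_smul, map_zero]
  | add p q hp hq =>
    rw [map_add, coeff_add, hasseDeriv_add, map_add, hp, hq]
  | mul_X p i hp =>
    rw [map_mul, aeval_X, hasseDeriv_mul_X, map_add, map_mul, eval_X]
    rw [mul_add, coeff_add]
    have e1 : coeff j (aeval (fun i => MvPolynomial.C (x i) + X i) p * MvPolynomial.C (x i))
        = x i * coeff j (aeval (fun i => MvPolynomial.C (x i) + X i) p) := by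
      rw [mul_comm, coeff_C_mul]
    rw [e1, hp j, coeff_mul_X']
    congr 1
    · rw [mul_comm]
    · by_cases h : i ∈ j.support
      · rw [if_pos h, hp, if_neg (Finsupp.mem_support_iff.mp h)]
      · rw [if_neg h, if_pos (Finsupp.notMem_support_iff.mp h), map_zero]


def VanLB {k : ℕ} (M : ℕ) (p : MvPolynomial (Fin k) R) : Prop :=
  ∀ e : Fin k →₀ ℕ, wtv e < M → coeff e p = 0

lemma VanLB_zero {k M} : VanLB (R := R) (k := k) M 0 := fun e _ => by simp

lemma VanLB_of_le {k M M'} {p : MvPolynomial (Fin k) R} (h : M' ≤ M) (hp : VanLB M p) :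
    VanLB M' p := fun e he => hp e (lt_of_lt_of_le he h)

lemma VanLB.add {k M} {p q : MvPolynomial (Fin k) R} (hp : VanLB M p) (hq : VanLB M q) :
    VanLB M (p + q) := fun e he => by rw [coeff_add, hp e he, hq e he, add_zero]

lemma VanLB.sum {k M ι} (s : Finset ι) (f : ι → MvPolynomial (Fin k) R)
    (h : ∀ i ∈ s, VanLB M (f i)) : VanLB M (∑ i ∈ s, f i) := by
  induction s using Finset.cons_induction with
  | empty => simpa using VanLB_zero
  | cons a s ha ih =>
    rw [Finset.sum_cons]
    exact VanLB.add (h a (Finset.mem_cons_self a s))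
      (ih fun i hi => h i (Finset.mem_cons_of_mem hi))

lemma VanLB.mul {k M M'} {p q : MvPolynomial (Fin k) R} (hp : VanLB M p) (hq : VanLB M' q) :
    VanLB (M + M') (p * q) := by
  intro e he
  rw [coeff_mul]
  apply Finset.sum_eq_zero
  rintro ⟨a, b⟩ hab
  rw [Finset.HasAntidiagonal.mem_antidiagonal] at hab
  have hw : wtv a + wtv b < M + M' := by rw [← wtv_add, hab]; exact he
  rcases lt_or_ge (wtv a) M with h | h
  · rw [hp a h, zero_mul]
  · rw [hq b (by omega), mul_zero]

lemma VanLB.pow {k M : ℕ} {p : MvPolynomial (Fin k) R} (hp : VanLB M p) (m : ℕ) :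
    VanLB (m * M) (p ^ m) := by
  induction m with
  | zero => intro e he; simp at he
  | succ r ih =>
    rw [pow_succ, Nat.succ_mul]
    exact ih.mul hp

lemma VanLB.prod {k : ℕ} {ι : Type*} (s : Finset ι) (f : ι → MvPolynomial (Fin k) R) (m : ι → ℕ)
    (h : ∀ i ∈ s, VanLB (m i) (f i)) : VanLB (∑ i ∈ s, m i) (∏ i ∈ s, f i) := by
  induction s using Finset.cons_induction with
  | empty => intro e he; simp at he
  | cons a s ha ih =>
    rw [Finset.sum_cons, Finset.prod_cons]
    exact VanLB.mul (h a (Finset.mem_cons_self a s))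
      (ih fun i hi => h i (Finset.mem_cons_of_mem hi))

lemma VanLB_aeval {k k' : ℕ} (B : Fin k → MvPolynomial (Fin k') R)
    (hB : ∀ i, VanLB 1 (B i)) {M : ℕ} {p : MvPolynomial (Fin k) R} (hp : VanLB M p) :
    VanLB M (aeval B p) := by
  have hrw : aeval B p = ∑ e ∈ p.support, aeval B (monomial e (coeff e p)) := by
    conv_lhs => rw [p.as_sum]
    rw [map_sum]
  rw [hrw]
  apply VanLB.sum
  intro e he
  rw [aeval_monomial]
  have h1 : M ≤ wtv e := by
    by_contra h
    exact (mem_support_iff.mp he) (hp e (by omega))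
  apply VanLB_of_le h1
  have h2 : wtv e = 0 + ∑ i ∈ e.support, (e i) * 1 := by
    rw [zero_add]
    simp only [mul_one]
    rfl
  rw [h2]
  apply VanLB.mul
  · intro f hf; omega
  · rw [Finsupp.prod]
    exact VanLB.prod _ _ _ (fun i _ => VanLB.pow (hB i) (e i))

lemma totalDegree_monomial_le' (e : Fin n →₀ ℕ) (a : R) :
    (monomial e a).totalDegree ≤ wtv e := by
  by_cases h : a = 0
  · subst h; rw [map_zero, totalDegree_zero]; omega
  · rw [totalDegree_monomial _ h]; exact le_rfl

lemma wtv_tsub_of_le {a b : Fin n →₀ ℕ} (h : a ≤ b) : wtv (b - a) = wtv b - wtv a := by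
  have h1 : b - a + a = b := tsub_add_cancel_of_le h
  have h2 := wtv_add (b - a) a
  rw [h1] at h2
  omega

lemma totalDegree_hasseDeriv_le (j : Fin n →₀ ℕ) (p : MvPolynomial (Fin n) R) :
    (hasseDeriv j p).totalDegree ≤ p.totalDegree - wtv j := by
  rw [totalDegree]
  apply Finset.sup_le
  intro e he
  have h1 : coeff (j + e) p ≠ 0 := by
    intro h0
    apply mem_support_iff.mp he
    rw [coeff_hasseDeriv, h0, smul_zero]
  have h2 : wtv (j + e) ≤ p.totalDegree := le_totalDegree (mem_support_iff.mpr h1)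
  rw [wtv_add] at h2
  show wtv e ≤ _
  omega

lemma totalDegree_aeval_le {k k' : ℕ} (B : Fin k → MvPolynomial (Fin k') R)
    (hB : ∀ i, (B i).totalDegree ≤ 1) (p : MvPolynomial (Fin k) R) :
    (aeval B p).totalDegree ≤ p.totalDegree := by
  have hrw : aeval B p = ∑ e ∈ p.support, aeval B (monomial e (coeff e p)) := by
    conv_lhs => rw [p.as_sum]
    rw [map_sum]
  rw [hrw]
  refine (totalDegree_finset_sum _ _).trans (Finset.sup_le ?_)
  intro e he
  rw [aeval_monomial, algebraMap_eq]
  refine (totalDegree_mul _ _).trans ?_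
  rw [totalDegree_C, zero_add, Finsupp.prod]
  refine (totalDegree_finset_prod _ _).trans ?_
  refine le_trans ?_ (le_totalDegree he)
  calc ∑ i ∈ e.support, (B i ^ e i).totalDegree
      ≤ ∑ i ∈ e.support, e i * 1 := Finset.sum_le_sum (fun i _ =>
        (totalDegree_pow _ _).trans (Nat.mul_le_mul_left _ (hB i)))
    _ ≤ e.sum fun _ m => m := le_of_eq (by simp only [mul_one]; rfl)


section Two

variable {F : Type*} [Field F]

lemma fin2_ext_iff (e f : Fin 2 →₀ ℕ) : e = f ↔ e 0 = f 0 ∧ e 1 = f 1 := by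
  constructor
  · rintro rfl; exact ⟨rfl, rfl⟩
  · rintro ⟨h0, h1⟩
    ext k
    fin_cases k
    · exact h0
    · exact h1

lemma single01_apply (i j : ℕ) :
    ((Finsupp.single (0 : Fin 2) i + Finsupp.single 1 j : Fin 2 →₀ ℕ) 0 = i) ∧
    ((Finsupp.single (0 : Fin 2) i + Finsupp.single 1 j : Fin 2 →₀ ℕ) 1 = j) := by
  constructor <;> simp [Finsupp.single_apply]

lemma wtv_fin2 (e : Fin 2 →₀ ℕ) : wtv e = e 0 + e 1 := by
  rw [wtv_eq_sum_univ, Fin.sum_univ_two]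

noncomputable def tau : MvPolynomial (Fin 2) F →ₐ[F] Polynomial (Polynomial F) :=
  aeval (fun i => if i = 0 then Polynomial.C Polynomial.X else Polynomial.X)

lemma tau_coeff_coeff (h : MvPolynomial (Fin 2) F) (i j : ℕ) :
    ((tau h).coeff j).coeff i = coeff (Finsupp.single 0 i + Finsupp.single 1 j) h := by
  induction h using MvPolynomial.induction_on' with
  | monomial e c =>
    have htau : tau (monomial e c)
        = Polynomial.monomial (e 1) (Polynomial.monomial (e 0) c) := by
      rw [tau, aeval_monomial, Finsupp.prod_fintype _ _ (fun _ => pow_zero _),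
        Fin.prod_univ_two]
      simp only [reduceIte, if_neg (by decide : ¬ (1 : Fin 2) = 0)]
      rw [← map_pow, ← mul_assoc, Polynomial.algebraMap_apply, Polynomial.algebraMap_eq,
        ← Polynomial.C_mul, Polynomial.C_mul_X_pow_eq_monomial]
      congr 1
      rw [Polynomial.C_mul_X_pow_eq_monomial]
    rw [htau, coeff_monomial, Polynomial.coeff_monomial]
    by_cases h1 : e 1 = j
    · rw [if_pos h1, Polynomial.coeff_monomial]
      by_cases h0 : e 0 = i
      · rw [if_pos h0, if_pos (by rw [fin2_ext_iff, (single01_apply i j).1,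
          (single01_apply i j).2]; exact ⟨h0, h1⟩)]
      · rw [if_neg h0, if_neg (fun hh => h0 (by
          rw [fin2_ext_iff, (single01_apply i j).1, (single01_apply i j).2] at hh
          exact hh.1))]
    · rw [if_neg h1, if_neg (fun hh => h1 (by
        rw [fin2_ext_iff, (single01_apply i j).1, (single01_apply i j).2] at hh
        exact hh.2)), Polynomial.coeff_zero]
  | add p q hp hq =>
    rw [map_add, Polynomial.coeff_add, Polynomial.coeff_add, coeff_add, hp, hq]

noncomputable def rho (a : F) : MvPolynomial (Fin 2) F →ₐ[F] Polynomial F :=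
  aeval (fun i => if i = 0 then Polynomial.C a else Polynomial.X)

lemma rho_eq (a : F) (h : MvPolynomial (Fin 2) F) :
    rho a h = Polynomial.map (Polynomial.aeval a).toRingHom (tau h) := by
  have key : (rho a : MvPolynomial (Fin 2) F →ₐ[F] Polynomial F)
      = (Polynomial.mapAlgHom (Polynomial.aeval a)).comp tau := by
    apply MvPolynomial.algHom_ext
    intro i
    fin_cases i <;>
      simp [rho, tau, Polynomial.coe_mapAlgHom]
  rw [key]
  rfl

lemma rho_coeff (a : F) (h : MvPolynomial (Fin 2) F) (j : ℕ) :
    (rho a h).coeff j = Polynomial.eval a ((tau h).coeff j) := by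
  rw [rho_eq, Polynomial.coeff_map]
  rfl

noncomputable def sigma0 : MvPolynomial (Fin 2) F →ₐ[F] Polynomial F :=
  aeval (fun i => if i = 0 then 0 else Polynomial.X)

noncomputable def shiftA {k : ℕ} {R : Type*} [CommRing R] (x : Fin k → R) :
    MvPolynomial (Fin k) R →ₐ[R] MvPolynomial (Fin k) R :=
  aeval (fun i => MvPolynomial.C (x i) + X i)

lemma shiftA_coeff {k : ℕ} {R : Type*} [CommRing R] (x : Fin k → R)
    (Q : MvPolynomial (Fin k) R) (j : Fin k →₀ ℕ) :
    coeff j (shiftA x Q) = eval x (hasseDeriv j Q) := taylor_coeff_mv x Q j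

lemma taylor_rho (a b : F) (h : MvPolynomial (Fin 2) F) :
    Polynomial.taylor b (rho a h) = sigma0 (shiftA ![a, b] h) := by
  have key : (Polynomial.taylorAlgHom b).comp (rho a)
      = (sigma0 : MvPolynomial (Fin 2) F →ₐ[F] Polynomial F).comp (shiftA ![a, b]) := by
    apply MvPolynomial.algHom_ext
    intro i
    fin_cases i <;>
      simp [rho, sigma0, shiftA, Polynomial.coe_taylorAlgHom,
        Polynomial.taylor_C, Polynomial.taylor_X] <;> ring
  exact AlgHom.congr_fun key h

lemma sigma0_coeff (h : MvPolynomial (Fin 2) F) (i : ℕ) :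
    (sigma0 h).coeff i = coeff (Finsupp.single 1 i) h := by
  induction h using MvPolynomial.induction_on' with
  | monomial e c =>
    rw [sigma0, aeval_monomial, Finsupp.prod_fintype _ _ (fun _ => pow_zero _),
      Fin.prod_univ_two]
    simp only [reduceIte, if_neg (by decide : ¬ (1 : Fin 2) = 0)]
    have hs : Finsupp.single (1 : Fin 2) i = Finsupp.single 0 0 + Finsupp.single 1 i := by
      rw [Finsupp.single_zero, zero_add]
    by_cases h0 : e 0 = 0
    · rw [h0, pow_zero, one_mul, Polynomial.algebraMap_eq, Polynomial.C_mul_X_pow_eq_monomial,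
        Polynomial.coeff_monomial, coeff_monomial]
      by_cases h1 : e 1 = i
      · rw [if_pos h1, if_pos (by rw [hs, fin2_ext_iff, (single01_apply 0 i).1,
          (single01_apply 0 i).2]; exact ⟨h0, h1⟩)]
      · rw [if_neg h1, if_neg (fun hh => h1 (by
          rw [hs, fin2_ext_iff, (single01_apply 0 i).1, (single01_apply 0 i).2] at hh
          exact hh.2))]
    · rw [zero_pow h0, zero_mul, mul_zero, Polynomial.coeff_zero, coeff_monomial,
        if_neg (fun hh => h0 (by
          rw [hs, fin2_ext_iff, (single01_apply 0 i).1, (single01_apply 0 i).2] at hh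
          exact hh.1)), ]
  | add p q hp hq =>
    rw [map_add, Polynomial.coeff_add, coeff_add, hp, hq]

lemma taylor_coeff_rootMultiplicity_ne_zero {p : Polynomial F} (hp : p ≠ 0) (b : F) :
    (Polynomial.taylor b p).coeff (p.rootMultiplicity b) ≠ 0 := by
  set m := p.rootMultiplicity b with hm
  have hdec := Polynomial.pow_mul_divByMonic_rootMultiplicity_eq p b
  set u := p /ₘ (Polynomial.X - Polynomial.C b) ^ m with hu
  have heval : u.eval b ≠ 0 := Polynomial.eval_divByMonic_pow_rootMultiplicity_ne_zero b hp
  have htp : Polynomial.taylor b p = Polynomial.X ^ m * Polynomial.taylor b u := by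
    rw [← hdec, Polynomial.taylor_mul]
    congr 1
    have : ∀ r : ℕ, Polynomial.taylor b ((Polynomial.X - Polynomial.C b) ^ r)
        = Polynomial.X ^ r := by
      intro r
      induction r with
      | zero => simp
      | succ w ih =>
        rw [pow_succ, Polynomial.taylor_mul, ih, pow_succ]
        congr 1
        rw [Polynomial.taylor_apply]
        simp
    exact this m
  rw [htp, mul_comm, Polynomial.coeff_mul_X_pow', if_pos le_rfl, Nat.sub_self,
    Polynomial.taylor_coeff_zero]
  exact heval

lemma le_rootMultiplicity_of_taylor {p : Polynomial F} (hp : p ≠ 0) (b : F) (M : ℕ)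
    (h : ∀ i, i < M → (Polynomial.taylor b p).coeff i = 0) : M ≤ p.rootMultiplicity b := by
  rw [Polynomial.le_rootMultiplicity_iff hp]
  obtain ⟨g, hg⟩ := Polynomial.X_pow_dvd_iff.mpr (fun d hd => h d hd)
  have hcomp : p = (Polynomial.taylor b p).comp (Polynomial.X - Polynomial.C b) := by
    rw [Polynomial.taylor_apply, Polynomial.comp_assoc]
    simp
  rw [hcomp, hg, Polynomial.mul_comp, Polynomial.X_pow_comp]
  exact Dvd.intro _ rfl

lemma sum_rootMultiplicity_le [Fintype F] {p : Polynomial F} (hp : p ≠ 0) :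
    ∑ a : F, p.rootMultiplicity a ≤ p.natDegree := by
  classical
  have h1 : ∑ a : F, p.roots.count a = Multiset.card p.roots := by
    rw [← Multiset.toFinset_sum_count_eq]
    exact (Finset.sum_subset (Finset.subset_univ _) (fun x _ hx =>
      Multiset.count_eq_zero.mpr (fun hmem => hx (Multiset.mem_toFinset.mpr hmem)))).symm
  calc ∑ a : F, p.rootMultiplicity a
      = ∑ a : F, p.roots.count a := by
        apply Finset.sum_congr rfl
        intro a _
        rw [Polynomial.count_roots]
    _ = Multiset.card p.roots := h1
    _ ≤ p.natDegree := Polynomial.card_roots' p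

lemma fin2_decomp (e : Fin 2 →₀ ℕ) :
    e = Finsupp.single 0 (e 0) + Finsupp.single 1 (e 1) := by
  rw [fin2_ext_iff, (single01_apply (e 0) (e 1)).1, (single01_apply (e 0) (e 1)).2]
  exact ⟨rfl, rfl⟩

lemma Nc_eq_two (d j : Fin 2 →₀ ℕ) : Nc d j = (d 0).choose (j 0) * (d 1).choose (j 1) := by
  rw [Nc, Fin.prod_univ_two]

lemma count_lemma [Fintype F] (f : MvPolynomial (Fin 2) F) (hf : f ≠ 0) (M : ℕ)
    (T : Finset (F × F)) (hT : ∀ p ∈ T, VanLB M (shiftA ![p.1, p.2] f)) :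
    M * T.card ≤ f.totalDegree * Fintype.card F := by
  classical
  set k := (tau (F := F) f).natDegree with hk
  set pk := (tau f).coeff k with hpk
  have htauf : tau f ≠ 0 := by
    intro h0
    apply hf
    ext e
    rw [coeff_zero, fin2_decomp e, ← tau_coeff_coeff, h0]
    simp
  have hpk_ne : pk ≠ 0 := Polynomial.leadingCoeff_ne_zero.mpr htauf
  have hknd : ∀ i, pk.coeff i ≠ 0 → i + k ≤ f.totalDegree := by
    intro i hi
    rw [hpk, tau_coeff_coeff] at hi
    have h2 := le_totalDegree (mem_support_iff.mpr hi)
    have h3 : wtv (Finsupp.single (0 : Fin 2) i + Finsupp.single 1 k) = i + k := by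
      rw [wtv_fin2, (single01_apply i k).1, (single01_apply i k).2]
    rw [← h3]
    exact h2
  have hkD : k ≤ f.totalDegree := by
    have h1 : pk.coeff pk.natDegree ≠ 0 := Polynomial.leadingCoeff_ne_zero.mpr hpk_ne
    have := hknd _ h1
    omega
  have hpkdeg : pk.natDegree ≤ f.totalDegree - k := by
    by_contra hcon
    push_neg at hcon
    have h1 : pk.coeff pk.natDegree ≠ 0 := Polynomial.leadingCoeff_ne_zero.mpr hpk_ne
    have := hknd _ h1
    omega
  have hcol : ∀ a : F, M * (T.filter (fun p => p.1 = a)).card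
      ≤ Fintype.card F * pk.rootMultiplicity a + k := by
    intro a
    set m := pk.rootMultiplicity a with hmdef
    set g := hasseDeriv (Finsupp.single 0 m) f with hg
    have hgcoeff : ∀ (i j : ℕ), ((tau g).coeff j).coeff i
        = (Nc (Finsupp.single (0 : Fin 2) (m + i) + Finsupp.single 1 j) (Finsupp.single 0 m)) •
          ((tau f).coeff j).coeff (m + i) := by
      intro i j
      have hidx : Finsupp.single (0 : Fin 2) m + (Finsupp.single 0 i + Finsupp.single 1 j)
          = Finsupp.single 0 (m + i) + Finsupp.single 1 j := by
        rw [← add_assoc, ← Finsupp.single_add]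
      rw [tau_coeff_coeff, hg, coeff_hasseDeriv, hidx, ← tau_coeff_coeff]
    have hNcval : ∀ (i j : ℕ), Nc (Finsupp.single (0 : Fin 2) (m + i) + Finsupp.single 1 j)
        (Finsupp.single 0 m) = (m + i).choose m := by
      intro i j
      rw [Nc_eq_two, (single01_apply (m + i) j).1, (single01_apply (m + i) j).2]
      rw [Finsupp.single_apply, Finsupp.single_apply]
      norm_num
    have hgk : (tau g).coeff k = Polynomial.hasseDeriv m pk := by
      ext i
      rw [Polynomial.hasseDeriv_coeff, hgcoeff, hNcval, hpk, nsmul_eq_mul,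
        Nat.add_comm m i]
    have hrhog_ne : rho a g ≠ 0 := by
      intro h0
      have hc : (rho a g).coeff k = 0 := by rw [h0, Polynomial.coeff_zero]
      rw [rho_coeff, hgk] at hc
      have h2 := taylor_coeff_rootMultiplicity_ne_zero hpk_ne a
      rw [Polynomial.taylor_coeff] at h2
      exact h2 hc
    have hdegg : (rho a g).natDegree ≤ k := by
      rw [rho_eq]
      refine Polynomial.natDegree_map_le.trans ?_
      rw [Polynomial.natDegree_le_iff_coeff_eq_zero]
      intro j hj
      ext i
      have hz : (tau f).coeff j = 0 := Polynomial.coeff_eq_zero_of_natDegree_lt hj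
      rw [hgcoeff, hz, Polynomial.coeff_zero, smul_zero, Polynomial.coeff_zero]
    have hpt : ∀ p ∈ T.filter (fun p => p.1 = a),
        M ≤ m + (rho a g).rootMultiplicity p.2 := by
      intro p hp
      rw [Finset.mem_filter] at hp
      obtain ⟨hpT, hpa⟩ := hp
      have hV : VanLB M (shiftA ![p.1, p.2] f) := hT p hpT
      rw [hpa] at hV
      have hVg : ∀ i, i < M - m → (Polynomial.taylor p.2 (rho a g)).coeff i = 0 := by
        intro i hi
        rw [taylor_rho, sigma0_coeff, shiftA_coeff, hg, hasseDeriv_comp]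
        have hz : eval ![a, p.2]
            (hasseDeriv (Finsupp.single 0 m + Finsupp.single 1 i) f) = 0 := by
          rw [← shiftA_coeff]
          apply hV
          rw [wtv_fin2, (single01_apply m i).1, (single01_apply m i).2]
          omega
        rw [map_nsmul, hz, smul_zero]
      have hle : M - m ≤ (rho a g).rootMultiplicity p.2 :=
        le_rootMultiplicity_of_taylor hrhog_ne p.2 (M - m) hVg
      omega
    set Ta := T.filter (fun p => p.1 = a) with hTa
    have hinj : Set.InjOn Prod.snd (Ta : Set (F × F)) := by
      intro x hx y hy hxy
      rw [hTa, Finset.coe_filter] at hx hy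
      obtain ⟨_, hx2⟩ := hx
      obtain ⟨_, hy2⟩ := hy
      exact Prod.ext (hx2.trans hy2.symm) hxy
    have hsum2 : ∑ p ∈ Ta, (rho a g).rootMultiplicity p.2
        = ∑ b ∈ Ta.image Prod.snd, (rho a g).rootMultiplicity b := by
      rw [Finset.sum_image (fun x hx y hy hxy => hinj hx hy hxy)]
    have hsum3 : ∑ b ∈ Ta.image Prod.snd, (rho a g).rootMultiplicity b
        ≤ ∑ b : F, (rho a g).rootMultiplicity b :=
      Finset.sum_le_sum_of_subset (Finset.subset_univ _)
    have hcard : Ta.card ≤ Fintype.card F := by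
      rw [← Finset.card_image_of_injOn hinj]
      exact (Finset.card_le_univ _)
    calc M * Ta.card = ∑ _p ∈ Ta, M := by rw [Finset.sum_const, smul_eq_mul, mul_comm]
      _ ≤ ∑ p ∈ Ta, (m + (rho a g).rootMultiplicity p.2) := Finset.sum_le_sum hpt
      _ = Ta.card * m + ∑ p ∈ Ta, (rho a g).rootMultiplicity p.2 := by
          rw [Finset.sum_add_distrib, Finset.sum_const, smul_eq_mul]
      _ ≤ Fintype.card F * m + k := by
          have h5 : ∑ p ∈ Ta, (rho a g).rootMultiplicity p.2 ≤ k := by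
            rw [hsum2]
            exact hsum3.trans ((sum_rootMultiplicity_le hrhog_ne).trans hdegg)
          exact Nat.add_le_add (Nat.mul_le_mul_right m hcard) h5
  have hfib : T.card = ∑ a : F, (T.filter (fun p => p.1 = a)).card :=
    Finset.card_eq_sum_card_fiberwise (fun x _ => Finset.mem_univ x.1)
  calc M * T.card = ∑ a : F, M * (T.filter (fun p => p.1 = a)).card := by
        rw [hfib, Finset.mul_sum]
    _ ≤ ∑ a : F, (Fintype.card F * pk.rootMultiplicity a + k) := Finset.sum_le_sum
        (fun a _ => hcol a)
    _ = Fintype.card F * (∑ a : F, pk.rootMultiplicity a) + k * Fintype.card F := by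
        rw [Finset.sum_add_distrib, ← Finset.mul_sum, Finset.sum_const, smul_eq_mul,
          Finset.card_univ, mul_comm (Fintype.card F) k]
    _ ≤ Fintype.card F * (f.totalDegree - k) + k * Fintype.card F := by
        have := (sum_rootMultiplicity_le hpk_ne).trans hpkdeg
        exact Nat.add_le_add_right (Nat.mul_le_mul_left _ this) _
    _ = f.totalDegree * Fintype.card F := by
        rw [mul_comm k, ← Nat.mul_add, Nat.sub_add_cancel hkD, mul_comm]

lemma wtv_eq_zero {k : ℕ} {e : Fin k →₀ ℕ} (h : wtv e < 1) : e = 0 := by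
  have h0 : ∑ i, e i = 0 := by rw [← wtv_eq_sum_univ]; omega
  rw [Finset.sum_eq_zero_iff] at h0
  ext i
  exact h0 i (Finset.mem_univ i)

end Two

end RV

/-- with `m = (q²+t−1)ℓ`, `d = q²tℓ − 1`, `t ≤ q`, if `Q` has degree at most `d`
and vanishes with multiplicity at least `m` on `K`, and the affine 2-flat
`{c + s₁u + s₂v}` contains at least `qt` points of `K`, then every substituted Hasse
derivative `Q^{(j)}(c + u t₁ + v t₂)` with `wt(j) < tℓ` is identically zero in `F_q[t₁,t₂]`. -/
theorem restriction_vanishes {F : Type*} [Field F] [Fintype F] {n : ℕ}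
    (t ℓ m d : ℕ) (ht : t ≤ Fintype.card F)
    (hm : m = (Fintype.card F ^ 2 + t - 1) * ℓ)
    (hd : d = Fintype.card F ^ 2 * t * ℓ - 1)
    (Q : MvPolynomial (Fin n) F) (hdeg : Q.totalDegree ≤ d)
    (K : Set (Fin n → F)) (hvan : ∀ x ∈ K, vanishesTo Q x m)
    (c u v : Fin n → F)
    (hrich : Fintype.card F * t ≤
      {x ∈ K | ∃ s₁ s₂ : F, x = fun i => c i + s₁ * u i + s₂ * v i}.ncard) :
    ∀ j : Fin n →₀ ℕ, (j.sum fun _ e => e) < t * ℓ →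
      MvPolynomial.aeval
        (fun i => MvPolynomial.C (c i) + MvPolynomial.C (u i) * MvPolynomial.X 0 +
          MvPolynomial.C (v i) * MvPolynomial.X (1 : Fin 2))
        (hasseDeriv j Q) = 0 := by
  classical
  open RV in
  intro j hwt
  by_contra hR
  set q := Fintype.card F with hq
  have hq1 : 0 < q := Fintype.card_pos
  have hq2 : 1 ≤ q ^ 2 := Nat.one_le_pow 2 q hq1
  set w := wtv j with hw
  have hwt' : w < t * ℓ := hwt
  have ht0 : 0 < t := by
    rcases Nat.eq_zero_or_pos t with h | h
    · subst h; simp at hwt'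
    · exact h
  have hl0 : 0 < ℓ := by
    rcases Nat.eq_zero_or_pos ℓ with h | h
    · subst h; simp at hwt'
    · exact h
  have hmtl : t * ℓ ≤ m := by
    rw [hm]
    exact Nat.mul_le_mul_right ℓ (by omega)
  have hwm : w < m := lt_of_lt_of_le hwt' hmtl
  have hwd : w ≤ d := by
    have h3 : t * ℓ ≤ q ^ 2 * (t * ℓ) := Nat.le_mul_of_pos_left _ (by positivity)
    have h4 : w < q ^ 2 * t * ℓ := by
      rw [mul_assoc]
      exact lt_of_lt_of_le hwt' h3
    rw [hd]
    exact Nat.le_pred_of_lt h4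
  set A : Fin n → MvPolynomial (Fin 2) F :=
    fun i => MvPolynomial.C (c i) + MvPolynomial.C (u i) * MvPolynomial.X 0 +
      MvPolynomial.C (v i) * MvPolynomial.X (1 : Fin 2) with hA
  set P := hasseDeriv j Q with hP
  set R := aeval A P with hRdef
  set T : Finset (F × F) := Finset.univ.filter
    (fun p : F × F => (fun i => c i + p.1 * u i + p.2 * v i) ∈ K) with hT
  have hcardT : q * t ≤ T.card := by
    have hsub : {x ∈ K | ∃ s₁ s₂ : F, x = fun i => c i + s₁ * u i + s₂ * v i}
        ⊆ (fun p : F × F => (fun i => c i + p.1 * u i + p.2 * v i)) '' (T : Set (F × F)) := by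
      rintro x ⟨hxK, s₁, s₂, hxe⟩
      refine ⟨(s₁, s₂), ?_, hxe.symm⟩
      rw [hT]
      simp only [Finset.coe_filter, Set.mem_setOf_eq, Finset.mem_univ, true_and]
      rw [← hxe]
      exact hxK
    calc q * t ≤ {x ∈ K | ∃ s₁ s₂ : F, x = fun i => c i + s₁ * u i + s₂ * v i}.ncard := hrich
      _ ≤ ((fun p : F × F => (fun i => c i + p.1 * u i + p.2 * v i)) ''
            (T : Set (F × F))).ncard :=
          Set.ncard_le_ncard hsub ((T.finite_toSet).image _)
      _ ≤ (T : Set (F × F)).ncard := Set.ncard_image_le T.finite_toSet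
      _ = T.card := Set.ncard_coe_finset T
  have hVan : ∀ p ∈ T, VanLB (m - w) (shiftA ![p.1, p.2] R) := by
    intro p hp
    rw [hT, Finset.mem_filter] at hp
    set x : Fin n → F := fun i => c i + p.1 * u i + p.2 * v i with hx
    have hxK : x ∈ K := hp.2
    set B : Fin n → MvPolynomial (Fin 2) F := fun i =>
      MvPolynomial.C (u i) * MvPolynomial.X 0 +
        MvPolynomial.C (v i) * MvPolynomial.X (1 : Fin 2) with hB
    have keyalg : (shiftA ![p.1, p.2]).comp (aeval A)
        = (aeval B).comp (shiftA x) := by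
      apply MvPolynomial.algHom_ext
      intro i
      simp only [AlgHom.coe_comp, Function.comp_apply, aeval_X, shiftA, hA, hB, hx,
        map_add, map_mul, aeval_C, algebraMap_eq, Matrix.cons_val_zero, Matrix.cons_val_one,
        Matrix.head_cons]
      ring
    have hshift : shiftA ![p.1, p.2] R = aeval B (shiftA x P) := by
      rw [hRdef]
      exact AlgHom.congr_fun keyalg P
    rw [hshift]
    apply VanLB_aeval
    · intro i e he
      have he0 : e = 0 := wtv_eq_zero he
      subst he0
      rw [hB]
      simp [coeff_X', Finsupp.single_eq_zero]
    · intro e he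
      rw [shiftA_coeff, hP, hasseDeriv_comp, map_nsmul]
      have hz : eval x (hasseDeriv (j + e) Q) = 0 := by
        apply hvan x hxK
        show wtv (j + e) < m
        rw [wtv_add]
        omega
      rw [hz, smul_zero]
  have hdegR : R.totalDegree ≤ d - w := by
    rw [hRdef]
    refine (totalDegree_aeval_le A ?_ P).trans ?_
    · intro i
      rw [hA]
      refine (totalDegree_add _ _).trans (max_le ((totalDegree_add _ _).trans
        (max_le ?_ ?_)) ?_)
      · rw [totalDegree_C]; omega
      · refine (totalDegree_mul _ _).trans ?_
        rw [totalDegree_C, totalDegree_X]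
      · refine (totalDegree_mul _ _).trans ?_
        rw [totalDegree_C, totalDegree_X]
    · exact (totalDegree_hasseDeriv_le j Q).trans (Nat.sub_le_sub_right hdeg w)
  have hcount := count_lemma R hR (m - w) T hVan
  have h6 : (m - w) * (q * t) ≤ (m - w) * T.card := Nat.mul_le_mul_left _ hcardT
  have h7 : R.totalDegree * q ≤ (d - w) * q := Nat.mul_le_mul_right _ hdegR
  have hfin : (m - w) * t ≤ d - w := by
    have h8 : ((m - w) * t) * q ≤ (d - w) * q := by
      calc ((m - w) * t) * q = (m - w) * (q * t) := by ring
        _ ≤ (m - w) * T.card := h6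
        _ ≤ R.totalDegree * q := hcount
        _ ≤ (d - w) * q := h7
    exact Nat.le_of_mul_le_mul_right h8 hq1
  -- final arithmetic contradiction
  have hqt1 : 1 ≤ q ^ 2 + t := by omega
  have hqtl1 : 1 ≤ q ^ 2 * t * ℓ := Nat.mul_pos (Nat.mul_pos (by positivity) ht0) hl0
  zify [hqt1] at hm
  zify [hqtl1] at hd
  zify [hwm.le, hwd] at hfin
  zify at hwt' hmtl
  have hkey : ((t : ℤ) - 1) * ((t : ℤ) * (ℓ : ℤ) - (w : ℤ)) ≥ 0 := by
    apply mul_nonneg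
    · have : (1 : ℤ) ≤ (t : ℤ) := by exact_mod_cast ht0
      linarith
    · linarith
  nlinarith [hfin, hm, hd, hkey, hwt']
end

section
/- Let q be a prime power, n, t, ℓ ∈ N, and let Q ∈ F_q[x_1,…,x_n] with highest-degree homogeneous part Q^H. Suppose for some u, v ∈ F_q^n the polynomial Q(c + u t_1 + v t_2) ∈ F_q[t_1,t_2] (for some c ∈ F_q^n) is identically zero together with all substituted Hasse derivatives Q^{(j)}(c + u t_1 + v t_2) for wt(j) < tℓ. Then (Q^H)^{(j)}(u t_1 + v t_2) = 0 in F_q[t_1,t_2] for all j with wt(j) < tℓ; that is, Q^H vanishes with multiplicity at least tℓ at the point u t_1 + v t_2 ∈ F_q(t_1,t_2)^n. -/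
open MvPolynomial

section Aux

open Finset

lemma Finsupp.degree_add' {σ : Type*} (a b : σ →₀ ℕ) :
    (a + b).degree = a.degree + b.degree := by
  simp [Finsupp.degree_eq_weight_one, map_add]

/-- Coefficient formula for the Hasse derivative. -/
lemma coeff_hasseDeriv {n : ℕ} {R : Type*} [CommRing R] (j : Fin n →₀ ℕ)
    (f : MvPolynomial (Fin n) R) (e : Fin n →₀ ℕ) :
    MvPolynomial.coeff e (hasseDeriv j f) =
      (∏ k ∈ (e + j).support ∪ j.support, Nat.choose ((e + j) k) (j k)) *
        MvPolynomial.coeff (e + j) f := by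
  unfold hasseDeriv
  rw [MvPolynomial.sum_def]
  rw [MvPolynomial.coeff_sum]
  rw [Finset.sum_eq_single (e + j)]
  · rw [MvPolynomial.coeff_smul, add_tsub_cancel_right, MvPolynomial.coeff_monomial,
      if_pos rfl, nsmul_eq_mul]
  · intro b hb hbne
    by_cases hle : j ≤ b
    · have hbj : b - j = e → b = e + j := fun h => by
        rw [← h, tsub_add_cancel_of_le hle]
      rw [MvPolynomial.coeff_smul, MvPolynomial.coeff_monomial]
      by_cases h : b - j = e
      · exact absurd (hbj h) hbne
      · rw [if_neg h, smul_zero]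
    · obtain ⟨k, hk⟩ : ∃ k, ¬ j k ≤ b k := by
        by_contra h
        push_neg at h
        exact hle (Finsupp.le_def.2 h)
      have hk' : b k < j k := by omega
      have hjk : k ∈ b.support ∪ j.support := by
        simp only [Finset.mem_union, Finsupp.mem_support_iff]
        right; omega
      have hz : (∏ k ∈ b.support ∪ j.support, Nat.choose (b k) (j k)) = 0 :=
        Finset.prod_eq_zero hjk (Nat.choose_eq_zero_of_lt hk')
      rw [hz, zero_smul, MvPolynomial.coeff_zero]
  · intro h
    rw [MvPolynomial.notMem_support_iff] at h
    simp [h]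

lemma totalDegree_hasseDeriv_le {n : ℕ} {R : Type*} [CommRing R] (j : Fin n →₀ ℕ)
    (f : MvPolynomial (Fin n) R) :
    (hasseDeriv j f).totalDegree ≤ f.totalDegree - j.degree := by
  apply Finset.sup_le
  intro d hd
  rw [MvPolynomial.mem_support_iff, coeff_hasseDeriv] at hd
  have h2 : MvPolynomial.coeff (d + j) f ≠ 0 := right_ne_zero_of_mul hd
  have h3 : (d + j).degree ≤ f.totalDegree :=
    MvPolynomial.le_totalDegree (MvPolynomial.mem_support_iff.2 h2)
  rw [Finsupp.degree_add'] at h3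
  show d.degree ≤ _
  omega

lemma hasseDeriv_homogeneousComponent {n : ℕ} {R : Type*} [CommRing R] (j : Fin n →₀ ℕ)
    (f : MvPolynomial (Fin n) R) (h : j.degree ≤ f.totalDegree) :
    hasseDeriv j (MvPolynomial.homogeneousComponent f.totalDegree f) =
      MvPolynomial.homogeneousComponent (f.totalDegree - j.degree) (hasseDeriv j f) := by
  ext e
  rw [coeff_hasseDeriv, MvPolynomial.coeff_homogeneousComponent,
    MvPolynomial.coeff_homogeneousComponent, coeff_hasseDeriv]
  have hadd : (e + j).degree = e.degree + j.degree := Finsupp.degree_add' e j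
  by_cases hcase : e.degree = f.totalDegree - j.degree
  · have h2 : (e + j).degree = f.totalDegree := by omega
    simp [hcase, h2]
  · have h2 : (e + j).degree ≠ f.totalDegree := by omega
    have h2' : e.degree + j.degree ≠ f.totalDegree := by omega
    simp [hcase, h2, h2']

lemma hasseDeriv_homogeneousComponent_zero {n : ℕ} {R : Type*} [CommRing R] (j : Fin n →₀ ℕ)
    (f : MvPolynomial (Fin n) R) (h : f.totalDegree < j.degree) :
    hasseDeriv j (MvPolynomial.homogeneousComponent f.totalDegree f) = 0 := by
  ext e
  rw [coeff_hasseDeriv, MvPolynomial.coeff_homogeneousComponent]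
  have hadd : (e + j).degree = e.degree + j.degree := Finsupp.degree_add' e j
  have h2 : (e + j).degree ≠ f.totalDegree := by omega
  have h2' : e.degree + j.degree ≠ f.totalDegree := by omega
  simp [h2, h2']

variable {R : Type*} [CommSemiring R] {σ τ : Type*}

lemma totalDegree_pow_le_of_le (p : MvPolynomial σ R) (hp : p.totalDegree ≤ 1) (k : ℕ) :
    (p ^ k).totalDegree ≤ k :=
  (MvPolynomial.totalDegree_pow p k).trans
    (le_trans (Nat.mul_le_mul_left k hp) (by omega))

lemma homogeneousComponent_mul_of_le (f g : MvPolynomial σ R) {a b : ℕ}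
    (hf : f.totalDegree ≤ a) (hg : g.totalDegree ≤ b) :
    MvPolynomial.homogeneousComponent (a + b) (f * g) =
      MvPolynomial.homogeneousComponent a f * MvPolynomial.homogeneousComponent b g := by
  have hf' : f = ∑ i ∈ Finset.range (a + 1), MvPolynomial.homogeneousComponent i f := by
    have := Finset.sum_subset (f := fun i => MvPolynomial.homogeneousComponent i f)
      (Finset.range_subset_range.2 (Nat.succ_le_succ hf))
      (fun i hi hni => MvPolynomial.homogeneousComponent_eq_zero i f (by
        simp only [Finset.mem_range] at hi hni; omega))
    rw [MvPolynomial.sum_homogeneousComponent] at this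
    exact this
  have hg' : g = ∑ i ∈ Finset.range (b + 1), MvPolynomial.homogeneousComponent i g := by
    have := Finset.sum_subset (f := fun i => MvPolynomial.homogeneousComponent i g)
      (Finset.range_subset_range.2 (Nat.succ_le_succ hg))
      (fun i hi hni => MvPolynomial.homogeneousComponent_eq_zero i g (by
        simp only [Finset.mem_range] at hi hni; omega))
    rw [MvPolynomial.sum_homogeneousComponent] at this
    exact this
  have key : ∀ i j : ℕ,
      MvPolynomial.homogeneousComponent (a + b)
        (MvPolynomial.homogeneousComponent i f * MvPolynomial.homogeneousComponent j g) =
      if a + b = i + j then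
        MvPolynomial.homogeneousComponent i f * MvPolynomial.homogeneousComponent j g
      else 0 := by
    intro i j
    exact MvPolynomial.homogeneousComponent_of_mem
      ((MvPolynomial.mem_homogeneousSubmodule _ _).2
        ((MvPolynomial.homogeneousComponent_isHomogeneous i f).mul
          (MvPolynomial.homogeneousComponent_isHomogeneous j g)))
  conv_lhs => rw [hf', hg']
  rw [Finset.sum_mul_sum]
  rw [map_sum]
  simp_rw [map_sum, key]
  rw [Finset.sum_eq_single a]
  · rw [Finset.sum_eq_single b]
    · rw [if_pos rfl]
    · intro j hj hjb
      rw [if_neg (by simp only [Finset.mem_range] at hj; omega)]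
    · intro h
      exact absurd (Finset.self_mem_range_succ b) h
  · intro i hi hia
    apply Finset.sum_eq_zero
    intro j hj
    rw [if_neg (by simp only [Finset.mem_range] at hi hj; omega)]
  · intro h
    exact absurd (Finset.self_mem_range_succ a) h

lemma homogeneousComponent_pow_of_le (p : MvPolynomial σ R) (hp : p.totalDegree ≤ 1) (k : ℕ) :
    MvPolynomial.homogeneousComponent k (p ^ k) =
      (MvPolynomial.homogeneousComponent 1 p) ^ k := by
  induction k with
  | zero => simp
  | succ k ih =>
    rw [pow_succ, pow_succ, ← ih,
      homogeneousComponent_mul_of_le _ _ (totalDegree_pow_le_of_le p hp k) hp]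

lemma homogeneousComponent_prod_of_le {ι : Type*} (s : Finset ι)
    (φ : ι → MvPolynomial σ R) (hφ : ∀ i, (φ i).totalDegree ≤ 1) (d : ι → ℕ) :
    MvPolynomial.homogeneousComponent (∑ i ∈ s, d i) (∏ i ∈ s, φ i ^ d i) =
      ∏ i ∈ s, (MvPolynomial.homogeneousComponent 1 (φ i)) ^ d i := by
  classical
  induction s using Finset.induction_on with
  | empty => simp
  | insert a s ha ih =>
    rw [Finset.sum_insert ha, Finset.prod_insert ha, Finset.prod_insert ha,
      homogeneousComponent_mul_of_le _ _ (totalDegree_pow_le_of_le _ (hφ a) _)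
        ((MvPolynomial.totalDegree_finset_prod s _).trans
          (Finset.sum_le_sum fun i _ => totalDegree_pow_le_of_le _ (hφ i) _)),
      homogeneousComponent_pow_of_le _ (hφ a), ih]

lemma totalDegree_prod_pow_le {ι : Type*} (s : Finset ι)
    (φ : ι → MvPolynomial σ R) (hφ : ∀ i, (φ i).totalDegree ≤ 1) (d : ι → ℕ) :
    (∏ i ∈ s, φ i ^ d i).totalDegree ≤ ∑ i ∈ s, d i :=
  (MvPolynomial.totalDegree_finset_prod s _).trans
    (Finset.sum_le_sum fun i _ => totalDegree_pow_le_of_le _ (hφ i) _)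

/-- The key lemma: the top homogeneous component of a degree-preserving substitution
with affine polynomials is the substitution of the linear parts into the
top homogeneous component. -/
lemma homogeneousComponent_aeval (φ : σ → MvPolynomial τ R)
    (hφ : ∀ i, (φ i).totalDegree ≤ 1) (m : ℕ) (P : MvPolynomial σ R)
    (hP : P.totalDegree ≤ m) :
    MvPolynomial.homogeneousComponent m (MvPolynomial.aeval φ P) =
      MvPolynomial.aeval (fun i => MvPolynomial.homogeneousComponent 1 (φ i))
        (MvPolynomial.homogeneousComponent m P) := by
  classical
  conv_lhs => rw [P.as_sum]
  conv_rhs => rw [P.as_sum]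
  rw [map_sum, map_sum, map_sum, map_sum]
  refine Finset.sum_congr rfl fun d hd => ?_
  have hdm : d.degree ≤ m := (MvPolynomial.le_totalDegree hd).trans hP
  rw [MvPolynomial.aeval_monomial, Finsupp.prod]
  rw [MvPolynomial.algebraMap_eq]
  rw [MvPolynomial.homogeneousComponent_C_mul]
  have hmono : MvPolynomial.homogeneousComponent m
      (MvPolynomial.monomial d (MvPolynomial.coeff d P)) =
      if m = d.degree then MvPolynomial.monomial d (MvPolynomial.coeff d P) else 0 :=
    MvPolynomial.homogeneousComponent_of_mem
      ((MvPolynomial.mem_homogeneousSubmodule _ _).2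
        (MvPolynomial.isHomogeneous_monomial _ rfl))
  rw [hmono]
  by_cases hcase : m = d.degree
  · rw [if_pos hcase]
    have : (∑ i ∈ d.support, d i) = m := hcase.symm
    rw [← this, homogeneousComponent_prod_of_le d.support φ hφ d]
    rw [MvPolynomial.aeval_monomial, Finsupp.prod, MvPolynomial.algebraMap_eq]
  · rw [if_neg hcase]
    have hlt : (∏ i ∈ d.support, φ i ^ d i).totalDegree < m := by
      have h1 := totalDegree_prod_pow_le d.support φ hφ d
      have h2 : (∑ i ∈ d.support, d i) = d.degree := rfl
      omega
    rw [MvPolynomial.homogeneousComponent_eq_zero _ _ hlt, mul_zero, map_zero]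

end Aux

/-- if all substituted Hasse derivatives `Q^{(j)}(c + u t₁ + v t₂)` with
`wt(j) < tℓ` vanish identically, then the highest-degree homogeneous part `Q^H` of `Q`
satisfies `(Q^H)^{(j)}(u t₁ + v t₂) = 0` in `F_q[t₁,t₂]` for all `j` with `wt(j) < tℓ`;
i.e. `Q^H` vanishes with multiplicity at least `tℓ` at `u t₁ + v t₂`. -/
theorem homogeneous_part_vanishes {F : Type*} [Field F] [Fintype F] {n : ℕ}
    (t ℓ : ℕ) (Q : MvPolynomial (Fin n) F) (c u v : Fin n → F)
    (hQ : ∀ j : Fin n →₀ ℕ, (j.sum fun _ e => e) < t * ℓ →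
      MvPolynomial.aeval
        (fun i => MvPolynomial.C (c i) + MvPolynomial.C (u i) * MvPolynomial.X 0 +
          MvPolynomial.C (v i) * MvPolynomial.X (1 : Fin 2))
        (hasseDeriv j Q) = 0) :
    ∀ j : Fin n →₀ ℕ, (j.sum fun _ e => e) < t * ℓ →
      MvPolynomial.aeval
        (fun i => MvPolynomial.C (u i) * MvPolynomial.X 0 +
          MvPolynomial.C (v i) * MvPolynomial.X (1 : Fin 2))
        (hasseDeriv j (MvPolynomial.homogeneousComponent Q.totalDegree Q)) = 0 := by
  intro j hj
  have hjdeg : (j.sum fun _ e => e) = j.degree := rfl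
  by_cases hw : j.degree ≤ Q.totalDegree
  · set φc : Fin n → MvPolynomial (Fin 2) F := fun i =>
      MvPolynomial.C (c i) + MvPolynomial.C (u i) * MvPolynomial.X 0 +
        MvPolynomial.C (v i) * MvPolynomial.X (1 : Fin 2) with hφc
    have hφdeg : ∀ i, (φc i).totalDegree ≤ 1 := by
      intro i
      refine (MvPolynomial.totalDegree_add _ _).trans (max_le
        ((MvPolynomial.totalDegree_add _ _).trans (max_le ?_ ?_)) ?_)
      · simp [MvPolynomial.totalDegree_C]
      · exact (MvPolynomial.isHomogeneous_C_mul_X _ _).totalDegree_le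
      · exact (MvPolynomial.isHomogeneous_C_mul_X _ _).totalDegree_le
    have hφ1 : ∀ i, MvPolynomial.homogeneousComponent 1 (φc i) =
        MvPolynomial.C (u i) * MvPolynomial.X 0 +
          MvPolynomial.C (v i) * MvPolynomial.X (1 : Fin 2) := by
      intro i
      rw [hφc, map_add, map_add]
      have h1 : MvPolynomial.homogeneousComponent 1 (MvPolynomial.C (c i) :
          MvPolynomial (Fin 2) F) = 0 := by
        rw [MvPolynomial.homogeneousComponent_of_mem
          ((MvPolynomial.mem_homogeneousSubmodule _ _).2
            (MvPolynomial.isHomogeneous_C _ _))]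
        simp
      have h2 : MvPolynomial.homogeneousComponent 1
          (MvPolynomial.C (u i) * MvPolynomial.X (0 : Fin 2)) =
          MvPolynomial.C (u i) * MvPolynomial.X 0 := by
        rw [MvPolynomial.homogeneousComponent_of_mem
          ((MvPolynomial.mem_homogeneousSubmodule _ _).2
            (MvPolynomial.isHomogeneous_C_mul_X _ _))]
        simp
      have h3 : MvPolynomial.homogeneousComponent 1
          (MvPolynomial.C (v i) * MvPolynomial.X (1 : Fin 2)) =
          MvPolynomial.C (v i) * MvPolynomial.X 1 := by
        rw [MvPolynomial.homogeneousComponent_of_mem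
          ((MvPolynomial.mem_homogeneousSubmodule _ _).2
            (MvPolynomial.isHomogeneous_C_mul_X _ _))]
        simp
      rw [h1, h2, h3, zero_add]
    rw [hasseDeriv_homogeneousComponent j Q hw]
    have hdeg : (hasseDeriv j Q).totalDegree ≤ Q.totalDegree - j.degree :=
      totalDegree_hasseDeriv_le j Q
    have := homogeneousComponent_aeval φc hφdeg (Q.totalDegree - j.degree)
      (hasseDeriv j Q) hdeg
    rw [hQ j hj, map_zero] at this
    rw [← funext hφ1]
    exact this.symm
  · rw [hasseDeriv_homogeneousComponent_zero j Q (by omega), map_zero]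
end
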